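/- arXiv:2508.04991 — 7 statements merged into one kernel-verified Lean document; each statement's English description precedes it below -/
import Mathlib

section
/- Let K ⊆ ℝⁿ be a nonempty closed set, f = (f_1,…,f_q) : ℝⁿ → ℝ^q a vector polynomial with deg f_i = d_i ≥ 1, and x̄ ∈ ℝⁿ. Then K_∞ ∩ ({x ∈ ℝⁿ : f_i(x) ≤ f_i(x̄) for all i})_∞ ⊆ {x ∈ K_∞ : (f_i)^∞(x) ≤ 0 for all i}. -/
open Filter Topology MvPolynomial Bornology

noncomputable section

lemma eval_smul_of_homogeneous {n : ℕ} {p : MvPolynomial (Fin n) ℝ} {j : ℕ}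
    (hp : p.IsHomogeneous j) (c : ℝ) (x : Fin n → ℝ) :
    eval (c • x) p = c ^ j * eval x p := by
  rw [eval_eq, eval_eq, Finset.mul_sum]
  apply Finset.sum_congr rfl
  intro d hd
  have hdeg : ∑ i ∈ d.support, d i = j := by
    have := hp (MvPolynomial.mem_support_iff.mp hd)
    simpa [Finsupp.weight_apply, Finsupp.sum] using this
  have : ∏ i ∈ d.support, (c • x) i ^ d i = c ^ j * ∏ i ∈ d.support, x i ^ d i := by
    simp only [Pi.smul_apply, smul_eq_mul, mul_pow, Finset.prod_mul_distrib,
      Finset.prod_pow_eq_pow_sum, hdeg]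
  rw [this]; ring

lemma key {n : ℕ} (p : MvPolynomial (Fin n) ℝ) (hd : 1 ≤ p.totalDegree)
    (c0 : ℝ) (t : ℕ → ℝ) (x : ℕ → (Fin n → ℝ)) (v : Fin n → ℝ)
    (ht : Tendsto t atTop atTop) (hx : ∀ k, eval (x k) p ≤ c0)
    (hy : Tendsto (fun k => (t k)⁻¹ • x k) atTop (nhds v)) :
    eval v (homogeneousComponent p.totalDegree p) ≤ 0 := by
  set d := p.totalDegree with hdd
  set y : ℕ → (Fin n → ℝ) := fun k => (t k)⁻¹ • x k with hyy
  have hev : ∀ᶠ k in atTop, 1 ≤ t k := ht.eventually_ge_atTop 1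
  set g : ℕ → ℝ := fun k => eval (x k) p / (t k) ^ d with hg
  set S : ℕ → ℝ := fun k => ∑ j ∈ Finset.range (d + 1),
    eval (y k) (homogeneousComponent j p) * (t k) ^ ((j : ℤ) - d) with hS
  have hA : ∀ᶠ k in atTop, g k = S k := by
    filter_upwards [hev] with k hk
    have htk : (0:ℝ) < t k := lt_of_lt_of_le one_pos hk
    have hxk : x k = t k • y k := by
      rw [hyy]; simp [smul_smul, mul_inv_cancel₀ htk.ne']
    rw [hg, hS]
    simp only [hxk]
    conv_lhs => rw [← MvPolynomial.sum_homogeneousComponent p]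
    rw [map_sum, Finset.sum_div]
    apply Finset.sum_congr rfl
    intro j hj
    rw [eval_smul_of_homogeneous (homogeneousComponent_isHomogeneous j p)]
    rw [zpow_sub₀ htk.ne', zpow_natCast, zpow_natCast]
    ring
  have hB : Tendsto S atTop (nhds (eval v (homogeneousComponent d p))) := by
    have : eval v (homogeneousComponent d p) =
        ∑ j ∈ Finset.range (d + 1),
          (if j = d then eval v (homogeneousComponent d p) else 0) := by
      rw [Finset.sum_ite_eq' (Finset.range (d + 1)) d]
      simp [Finset.mem_range]
    rw [this]
    apply tendsto_finset_sum
    intro j hj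
    have hcont : Tendsto (fun k => eval (y k) (homogeneousComponent j p)) atTop
        (nhds (eval v (homogeneousComponent j p))) :=
      ((MvPolynomial.continuous_eval (p := homogeneousComponent j p)).tendsto v).comp hy
    rcases eq_or_lt_of_le (Nat.lt_succ_iff.mp (Finset.mem_range.mp hj)) with h | h
    · subst h
      simp only [if_pos rfl, sub_self, zpow_zero, mul_one]
      exact hcont
    · rw [if_neg h.ne]
      have hz : Tendsto (fun k => (t k) ^ ((j : ℤ) - d)) atTop (nhds 0) :=
        (tendsto_zpow_atTop_zero (n := (j:ℤ) - d) (by omega)).comp ht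
      simpa using hcont.mul hz
  have hgB : Tendsto g atTop (nhds (eval v (homogeneousComponent d p))) :=
    hB.congr' (hA.mono fun _ e => e.symm)
  have hC : ∀ᶠ k in atTop, g k ≤ c0 / (t k) ^ d := by
    filter_upwards [hev] with k hk
    have htk : (0:ℝ) < (t k) ^ d := pow_pos (lt_of_lt_of_le one_pos hk) d
    exact div_le_div_of_nonneg_right (hx k) htk.le
  have hD : Tendsto (fun k => c0 / (t k) ^ d) atTop (nhds 0) :=
    Tendsto.div_atTop tendsto_const_nhds ((tendsto_pow_atTop (by omega)).comp ht)
  exact le_of_tendsto_of_tendsto hgB hD hC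


/-- The asymptotic (recession) cone of a set `A ⊆ ℝⁿ`. -/
def asymCone {n : ℕ} (A : Set (Fin n → ℝ)) : Set (Fin n → ℝ) :=
  {v | ∃ (t : ℕ → ℝ) (x : ℕ → (Fin n → ℝ)),
    Filter.Tendsto t Filter.atTop Filter.atTop ∧ (∀ k, x k ∈ A) ∧
    Filter.Tendsto (fun k => (t k)⁻¹ • x k) Filter.atTop (nhds v)}

/-- Pareto efficient solutions of the vector map `g` on `C`. -/
def SOLs {n q : ℕ} (C : Set (Fin n → ℝ)) (g : Fin q → (Fin n → ℝ) → ℝ) :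
    Set (Fin n → ℝ) :=
  {x | x ∈ C ∧ ¬ ∃ y ∈ C, (∀ i, g i y ≤ g i x) ∧ (∃ i, g i y ≠ g i x)}

/-- Weak Pareto efficient solutions of the vector map `g` on `C`. -/
def SOLw {n q : ℕ} (C : Set (Fin n → ℝ)) (g : Fin q → (Fin n → ℝ) → ℝ) :
    Set (Fin n → ℝ) :=
  {x | x ∈ C ∧ ¬ ∃ y ∈ C, ∀ i, g i y < g i x}

/-- Global minimizers of a scalar function `p` on `C`. -/
def SOLmin {n : ℕ} (C : Set (Fin n → ℝ)) (p : (Fin n → ℝ) → ℝ) :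
    Set (Fin n → ℝ) :=
  {x | x ∈ C ∧ ∀ y ∈ C, p x ≤ p y}

/-- The recession polynomial (leading term: top-degree homogeneous part) of a
polynomial, as a function on `ℝⁿ`. -/
noncomputable def recPoly {n : ℕ} (p : MvPolynomial (Fin n) ℝ) : (Fin n → ℝ) → ℝ :=
  fun x => MvPolynomial.eval x (MvPolynomial.homogeneousComponent p.totalDegree p)

theorem stmt0 {n q : ℕ} (K : Set (Fin n → ℝ)) (hKne : K.Nonempty) (hKcl : IsClosed K)
    (f : Fin q → MvPolynomial (Fin n) ℝ) (hdeg : ∀ i, 1 ≤ (f i).totalDegree)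
    (xbar : Fin n → ℝ) :
    asymCone K ∩ asymCone {x | ∀ i, eval x (f i) ≤ eval xbar (f i)} ⊆
      {x | x ∈ asymCone K ∧ ∀ i, recPoly (f i) x ≤ 0} := by
  rintro v ⟨hvK, t, x, ht, hx, hy⟩
  refine ⟨hvK, fun i => ?_⟩
  exact key (f i) (hdeg i) (eval xbar (f i)) t x v ht (fun k => hx k i) hy
end
end

section
/- Let f = (f_1,…,f_q) be a vector polynomial and S ⊆ ℝⁿ a nonempty closed set with S_∞ ⊆ {x ∈ ℝⁿ : (f_i)^∞(x) ≤ 0 for all i}. Then: (i) SOL^s(S_∞, f^∞) = ∅ if and only if 0 ∉ SOL^s(S_∞, f^∞); (ii) SOL^w(S_∞, f^∞) = ∅ if and only if 0 ∉ SOL^w(S_∞, f^∞). -/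
open Filter Topology MvPolynomial Bornology

noncomputable section

lemma eval_smul_of_homog {n m : ℕ} {φ : MvPolynomial (Fin n) ℝ}
    (hφ : φ.IsHomogeneous m) (c : ℝ) (x : Fin n → ℝ) :
    MvPolynomial.eval (c • x) φ = c ^ m * MvPolynomial.eval x φ := by
  rw [MvPolynomial.eval_eq, MvPolynomial.eval_eq, Finset.mul_sum]
  apply Finset.sum_congr rfl
  intro d hd
  have hdeg : ∑ i ∈ d.support, d i = m := by
    have h := hφ (MvPolynomial.mem_support_iff.mp hd)
    simpa [Finsupp.weight_apply, Finsupp.sum] using h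
  rw [← hdeg]
  simp only [Pi.smul_apply, smul_eq_mul, mul_pow]
  rw [Finset.prod_mul_distrib, Finset.prod_pow_eq_pow_sum]
  ring

lemma recPoly_smul {n : ℕ} (p : MvPolynomial (Fin n) ℝ) (c : ℝ) (x : Fin n → ℝ) :
    recPoly p (c • x) = c ^ p.totalDegree * recPoly p x :=
  eval_smul_of_homog (MvPolynomial.homogeneousComponent_isHomogeneous _ _) c x

lemma recPoly_zero {n : ℕ} (p : MvPolynomial (Fin n) ℝ) (hd : 1 ≤ p.totalDegree) :
    recPoly p (0 : Fin n → ℝ) = 0 := by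
  have h := recPoly_smul p 0 (0 : Fin n → ℝ)
  rw [zero_smul, zero_pow (by omega), zero_mul] at h
  exact h

lemma zero_mem_asymCone {n : ℕ} {S : Set (Fin n → ℝ)} (hSne : S.Nonempty) :
    (0 : Fin n → ℝ) ∈ asymCone S := by
  obtain ⟨x₀, hx₀⟩ := hSne
  refine ⟨fun k => (k : ℝ) + 1, fun _ => x₀, ?_, fun _ => hx₀, ?_⟩
  · exact tendsto_atTop_add_const_right _ 1 tendsto_natCast_atTop_atTop
  · have h : Tendsto (fun k : ℕ => ((k : ℝ) + 1)⁻¹) atTop (nhds 0) :=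
      tendsto_inv_atTop_zero.comp (tendsto_atTop_add_const_right _ 1 tendsto_natCast_atTop_atTop)
    simpa using h.smul_const x₀

lemma smul_mem_asymCone {n : ℕ} {S : Set (Fin n → ℝ)} {v : Fin n → ℝ} (c : ℝ)
    (hc : 0 < c) (hv : v ∈ asymCone S) : c • v ∈ asymCone S := by
  obtain ⟨t, x, ht, hx, hlim⟩ := hv
  refine ⟨fun k => t k / c, x, ht.atTop_div_const hc, hx, ?_⟩
  have he : ∀ k, (t k / c)⁻¹ • x k = c • ((t k)⁻¹ • x k) := by
    intro k
    rw [smul_smul, inv_div, div_eq_mul_inv]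
  simp_rw [he]
  exact hlim.const_smul c

theorem stmt1 {n q : ℕ} (f : Fin q → MvPolynomial (Fin n) ℝ)
    (hdeg : ∀ i, 1 ≤ (f i).totalDegree)
    (S : Set (Fin n → ℝ)) (hSne : S.Nonempty) (hScl : IsClosed S)
    (hsub : asymCone S ⊆ {x | ∀ i, recPoly (f i) x ≤ 0}) :
    (SOLs (asymCone S) (fun i => recPoly (f i)) = ∅ ↔
      (0 : Fin n → ℝ) ∉ SOLs (asymCone S) (fun i => recPoly (f i))) ∧
    (SOLw (asymCone S) (fun i => recPoly (f i)) = ∅ ↔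
      (0 : Fin n → ℝ) ∉ SOLw (asymCone S) (fun i => recPoly (f i))) := by
  have hz : (0 : Fin n → ℝ) ∈ asymCone S := zero_mem_asymCone hSne
  have hg0 : ∀ i, recPoly (f i) (0 : Fin n → ℝ) = 0 := fun i => recPoly_zero _ (hdeg i)
  constructor
  · constructor
    · intro h h0; rw [h] at h0; exact h0
    · intro h0
      ext x; simp only [Set.mem_empty_iff_false, iff_false]
      intro hx
      obtain ⟨hxC, hxne⟩ := hx
      have hall : ∀ i, recPoly (f i) x = 0 := by
        by_contra hcon
        push_neg at hcon
        obtain ⟨j, hj⟩ := hcon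
        have hjlt : recPoly (f j) x < 0 := lt_of_le_of_ne (hsub hxC j) hj
        apply hxne
        refine ⟨(2:ℝ) • x, smul_mem_asymCone 2 (by norm_num) hxC, ?_, ⟨j, ?_⟩⟩
        · intro i
          simp only [recPoly_smul]
          have h1 : (1:ℝ) ≤ 2 ^ (f i).totalDegree := one_le_pow₀ one_le_two
          nlinarith [hsub hxC i]
        · simp only [recPoly_smul]
          have h2 : (2:ℝ) ≤ 2 ^ (f j).totalDegree := by
            calc (2:ℝ) = 2 ^ 1 := (pow_one 2).symm
            _ ≤ 2 ^ (f j).totalDegree := pow_le_pow_right₀ one_le_two (hdeg j)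
          nlinarith
      have hex : ∃ y ∈ asymCone S, (∀ i, recPoly (f i) y ≤ recPoly (f i) (0 : Fin n → ℝ)) ∧
          ∃ i, recPoly (f i) y ≠ recPoly (f i) (0 : Fin n → ℝ) := by
        by_contra hc; exact h0 ⟨hz, hc⟩
      obtain ⟨y, hyC, hyle, j, hjne⟩ := hex
      refine hxne ⟨y, hyC, fun i => ?_, ⟨j, ?_⟩⟩
      · show recPoly (f i) y ≤ recPoly (f i) x
        rw [hall i]; simpa [hg0 i] using hyle i
      · show recPoly (f j) y ≠ recPoly (f j) x
        rw [hall j]; simpa [hg0 j] using hjne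
  · constructor
    · intro h h0; rw [h] at h0; exact h0
    · intro h0
      ext x; simp only [Set.mem_empty_iff_false, iff_false]
      intro hx
      obtain ⟨hxC, hxne⟩ := hx
      have hex : ∃ y ∈ asymCone S, ∀ i, recPoly (f i) y < recPoly (f i) (0 : Fin n → ℝ) := by
        by_contra hc; exact h0 ⟨hz, hc⟩
      obtain ⟨y, hyC, hylt⟩ := hex
      have hylt' : ∀ i, recPoly (f i) y < 0 := fun i => by simpa [hg0 i] using hylt i
      set lam : ℝ := 1 + ∑ i, max (recPoly (f i) x / recPoly (f i) y) 0 with hlam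
      have hsum0 : 0 ≤ ∑ i, max (recPoly (f i) x / recPoly (f i) y) 0 :=
        Finset.sum_nonneg fun i _ => le_max_right _ _
      have hlam1 : (1:ℝ) ≤ lam := by simp only [hlam]; linarith
      have hlampos : 0 < lam := by linarith
      apply hxne
      refine ⟨lam • y, smul_mem_asymCone lam hlampos hyC, fun i => ?_⟩
      simp only [recPoly_smul]
      have hr : recPoly (f i) x / recPoly (f i) y < lam := by
        have h1 : max (recPoly (f i) x / recPoly (f i) y) 0 ≤
            ∑ j, max (recPoly (f j) x / recPoly (f j) y) 0 :=
          Finset.single_le_sum (f := fun k => max (recPoly (f k) x / recPoly (f k) y) 0)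
            (fun k _ => le_max_right _ _) (Finset.mem_univ i)
        have h2 := le_max_left (recPoly (f i) x / recPoly (f i) y) 0
        simp only [hlam]; linarith
      have hmul : lam * recPoly (f i) y < recPoly (f i) x :=
        (div_lt_iff_of_neg (hylt' i)).mp hr
      have hpow : lam ≤ lam ^ (f i).totalDegree := by
        calc lam = lam ^ 1 := (pow_one lam).symm
        _ ≤ lam ^ (f i).totalDegree := pow_le_pow_right₀ hlam1 (hdeg i)
      nlinarith [hylt' i]
end
end

section
/- Let f = (f_1,…,f_q) be a vector polynomial and S ⊆ ℝⁿ a nonempty set such that every f_i, i = 1,…,q, is bounded from below on S. Then for every λ ∈ ℝ^q with λ_i ≥ 0 for all i and λ ≠ 0, one has 0 ∈ SOL(S_∞, (Σ_{i=1}^q λ_i f_i)^∞). -/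
open Filter Topology MvPolynomial Bornology

noncomputable section

lemma eval_smul_isHomogeneous {n : ℕ} {p : MvPolynomial (Fin n) ℝ} {d : ℕ}
    (hp : p.IsHomogeneous d) (c : ℝ) (x : Fin n → ℝ) :
    eval (c • x) p = c ^ d * eval x p := by
  rw [eval_eq', eval_eq', Finset.mul_sum]
  refine Finset.sum_congr rfl fun m hm => ?_
  have hd : ∑ i, m i = d := by
    have h1 := hp (mem_support_iff.mp hm)
    rw [← h1, Finsupp.weight_apply, Finsupp.sum_fintype]
    · simp
    · simp
  calc coeff m p * ∏ i, (c • x) i ^ m i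
      = coeff m p * ((∏ i, c ^ m i) * ∏ i, x i ^ m i) := by
        rw [← Finset.prod_mul_distrib]; simp [mul_pow]
    _ = c ^ d * (coeff m p * ∏ i, x i ^ m i) := by
        rw [Finset.prod_pow_eq_pow_sum, hd]; ring

theorem stmt5 {n q : ℕ} (f : Fin q → MvPolynomial (Fin n) ℝ)
    (hdeg : ∀ i, 1 ≤ (f i).totalDegree)
    (S : Set (Fin n → ℝ)) (hSne : S.Nonempty)
    (hbd : ∀ i, ∃ m : ℝ, ∀ x ∈ S, m ≤ eval x (f i)) :
    ∀ lam : Fin q → ℝ, (∀ i, 0 ≤ lam i) → lam ≠ 0 →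
      (0 : Fin n → ℝ) ∈
        SOLmin (asymCone S) (recPoly (∑ i, MvPolynomial.C (lam i) * f i)) := by
  intro lam hlam hlam0
  -- P is bounded below on S
  obtain ⟨m, hm⟩ : ∃ m : ℝ, ∀ x ∈ S,
      m ≤ eval x (∑ i, MvPolynomial.C (lam i) * f i) := by
    choose M hM using hbd
    refine ⟨∑ i, lam i * M i, fun x hx => ?_⟩
    rw [map_sum]
    refine Finset.sum_le_sum fun i _ => ?_
    rw [map_mul, eval_C]
    exact mul_le_mul_of_nonneg_left (hM i x hx) (hlam i)
  set P : MvPolynomial (Fin n) ℝ := ∑ i, MvPolynomial.C (lam i) * f i with hP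
  refine ⟨zero_mem_asymCone hSne, ?_⟩
  · intro v hv
    rcases Nat.eq_zero_or_pos P.totalDegree with hd0 | hd0
    · simp [recPoly, hd0, MvPolynomial.homogeneousComponent_zero]
    -- the degree is at least one
    set d := P.totalDegree with hd
    have hrec0 : recPoly P 0 = 0 := by
      have h := eval_smul_isHomogeneous (homogeneousComponent_isHomogeneous d P)
        (0 : ℝ) (0 : Fin n → ℝ)
      rw [zero_pow hd0.ne', zero_mul, smul_zero] at h
      exact h
    rw [hrec0]
    obtain ⟨t, x, ht, hxS, hxv⟩ := hv
    set y : ℕ → (Fin n → ℝ) := fun k => (t k)⁻¹ • x k with hy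
    set g : ℕ → ℝ := fun k => (t k)⁻¹ ^ d * eval (x k) P with hg
    -- g is eventually equal to an explicit sum
    have hev : ∀ᶠ k in atTop, g k =
        ∑ j ∈ Finset.range (d + 1),
          (t k)⁻¹ ^ (d - j) * eval (y k) (homogeneousComponent j P) := by
      filter_upwards [ht.eventually_gt_atTop 0] with k htk
      have htk' : t k ≠ 0 := ne_of_gt htk
      have hxk : x k = t k • y k := by
        rw [hy]; simp [smul_smul, mul_inv_cancel₀ htk']
      have hPsum := MvPolynomial.sum_homogeneousComponent P
      calc g k = (t k)⁻¹ ^ d *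
            eval (t k • y k) (∑ j ∈ Finset.range (d + 1), homogeneousComponent j P) := by
            rw [hg]; rw [hPsum, ← hxk]
        _ = ∑ j ∈ Finset.range (d + 1),
              (t k)⁻¹ ^ d * ((t k) ^ j * eval (y k) (homogeneousComponent j P)) := by
            rw [map_sum, Finset.mul_sum]
            refine Finset.sum_congr rfl fun j _ => ?_
            rw [eval_smul_isHomogeneous (homogeneousComponent_isHomogeneous j P)]
        _ = ∑ j ∈ Finset.range (d + 1),
              (t k)⁻¹ ^ (d - j) * eval (y k) (homogeneousComponent j P) := by
            refine Finset.sum_congr rfl fun j hj => ?_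
            have hjd : j ≤ d := Nat.lt_succ_iff.mp (Finset.mem_range.mp hj)
            have : (t k)⁻¹ ^ d * (t k) ^ j = (t k)⁻¹ ^ (d - j) := by
              rw [← Nat.sub_add_cancel hjd, pow_add]
              field_simp
              rw [Nat.add_sub_cancel, mul_assoc, ← mul_pow, one_div, inv_mul_cancel₀ htk', one_pow, mul_one]
            rw [← this]; ring
    -- the limit of g
    have htinv : Tendsto (fun k => (t k)⁻¹) atTop (nhds 0) := tendsto_inv_atTop_zero.comp ht
    have hcont : ∀ (p : MvPolynomial (Fin n) ℝ),
        Tendsto (fun k => eval (y k) p) atTop (nhds (eval v p)) := fun p =>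
      (MvPolynomial.continuous_eval (p := p)).continuousAt.tendsto.comp hxv
    have hsum : Tendsto (fun k => ∑ j ∈ Finset.range (d + 1),
        (t k)⁻¹ ^ (d - j) * eval (y k) (homogeneousComponent j P)) atTop
        (nhds (∑ j ∈ Finset.range (d + 1),
          (0 : ℝ) ^ (d - j) * eval v (homogeneousComponent j P))) := by
      refine tendsto_finset_sum _ fun j _ => ?_
      exact (htinv.pow _).mul (hcont _)
    have hsumval : (∑ j ∈ Finset.range (d + 1),
        (0 : ℝ) ^ (d - j) * eval v (homogeneousComponent j P))
        = eval v (homogeneousComponent d P) := by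
      rw [Finset.sum_eq_single d]
      · simp
      · intro j hj hjd
        have : 0 < d - j := Nat.sub_pos_of_lt
          (lt_of_le_of_ne (Nat.lt_succ_iff.mp (Finset.mem_range.mp hj)) hjd)
        rw [zero_pow this.ne', zero_mul]
      · intro h; exact absurd (Finset.self_mem_range_succ d) h
    have hglim : Tendsto g atTop (nhds (eval v (homogeneousComponent d P))) := by
      rw [← hsumval]
      have hev' : g =ᶠ[atTop] (fun k => ∑ j ∈ Finset.range (d + 1),
          (t k)⁻¹ ^ (d - j) * eval (y k) (homogeneousComponent j P)) := hev
      exact Tendsto.congr' hev'.symm hsum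
    -- the lower bound
    have hlow : ∀ᶠ k in atTop, (t k)⁻¹ ^ d * m ≤ g k := by
      filter_upwards [ht.eventually_gt_atTop 0] with k htk
      exact mul_le_mul_of_nonneg_left (hm _ (hxS k))
        (pow_nonneg (inv_nonneg.mpr htk.le) d)
    have hlbd : Tendsto (fun k => (t k)⁻¹ ^ d * m) atTop (nhds 0) := by
      have := (htinv.pow d).mul_const m
      simpa [inv_pow, zero_pow hd0.ne'] using this
    exact le_of_tendsto_of_tendsto hlbd hglim hlow
end
end

section
/- Let K ⊆ ℝⁿ be a nonempty closed set and f = (f_1,…,f_q) a vector polynomial. (i) If SOL^s(K, f) ≠ ∅, then there exist x̄ ∈ K and a nonempty closed set S ⊆ ℝⁿ with (K_x̄)_∞ ⊆ S_∞ ⊆ K_∞ such that SOL(S_∞, (Σ_{i=1}^q λ_i f_i)^∞) ≠ ∅ for every λ ∈ ℝ^q with λ_i ≥ 0 for all i and λ ≠ 0. (ii) If SOL^w(K, f) ≠ ∅, then there exist x̄ ∈ K, a nonempty closed set S ⊆ ℝⁿ with (K_x̄)_∞ ⊆ S_∞ ⊆ K_∞, and λ ∈ ℝ^q with λ_i ≥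 0 for all i and λ ≠ 0 such that SOL(S_∞, (Σ_{i=1}^q λ_i f_i)^∞) ≠ ∅. -/
open Filter Topology MvPolynomial Bornology

noncomputable section

lemma eval_smul_isHomog {n : ℕ} {p : MvPolynomial (Fin n) ℝ} {m : ℕ}
    (hp : p.IsHomogeneous m) (t : ℝ) (x : Fin n → ℝ) :
    eval (t • x) p = t ^ m * eval x p := by
  rw [eval_eq', eval_eq', Finset.mul_sum]
  apply Finset.sum_congr rfl
  intro d hd
  have hdd : d.degree = m := by
    by_contra h
    exact (mem_support_iff.mp hd) (hp.coeff_eq_zero h)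
  have hsum : ∑ i, d i = m := by
    rw [← hdd, Finsupp.degree]
    exact (Finset.sum_subset (Finset.subset_univ _)
      (fun i _ hi => Finsupp.notMem_support_iff.mp hi)).symm
  simp only [Pi.smul_apply, smul_eq_mul, mul_pow]
  rw [Finset.prod_mul_distrib, Finset.prod_pow_eq_pow_sum, hsum]
  ring

lemma zero_mem_asymCone_s9 {n : ℕ} {A : Set (Fin n → ℝ)} (hA : A.Nonempty) :
    (0 : Fin n → ℝ) ∈ asymCone A := by
  obtain ⟨a, ha⟩ := hA
  refine ⟨fun k => (k : ℝ), fun _ => a, tendsto_natCast_atTop_atTop, fun _ => ha, ?_⟩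
  have h1 : Tendsto (fun k : ℕ => ((k : ℝ))⁻¹) atTop (nhds 0) :=
    tendsto_natCast_atTop_atTop.inv_tendsto_atTop
  simpa using h1.smul_const a

lemma recPoly_eq_zero_on_asymCone {n : ℕ} {A : Set (Fin n → ℝ)}
    {p : MvPolynomial (Fin n) ℝ} (hd : 1 ≤ p.totalDegree) {c : ℝ}
    (hc : ∀ x ∈ A, eval x p = c) {v : Fin n → ℝ} (hv : v ∈ asymCone A) :
    recPoly p v = 0 := by
  obtain ⟨t, x, ht, hx, hlim⟩ := hv
  set d := p.totalDegree with hdd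
  set u : ℕ → (Fin n → ℝ) := fun k => (t k)⁻¹ • x k with hu
  -- limit 1: eval (u k) (homogeneousComponent d p) → recPoly p v
  have hcont : Continuous fun y : Fin n → ℝ => eval y (homogeneousComponent d p) :=
    MvPolynomial.continuous_eval _
  have hlim1 : Tendsto (fun k => eval (u k) (homogeneousComponent d p)) atTop
      (nhds (recPoly p v)) := (hcont.tendsto v).comp hlim
  -- limit 2: same sequence → 0
  have hev : ∀ᶠ k in atTop, eval (u k) (homogeneousComponent d p)
      = (t k)⁻¹ ^ d * c
        - ∑ j ∈ Finset.range d, (t k)⁻¹ ^ (d - j) * eval (u k) (homogeneousComponent j p) := by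
    filter_upwards [ht.eventually_ge_atTop 1] with k hk
    have htk : (t k) ≠ 0 := by positivity
    have hxk : x k = t k • u k := by
      rw [hu]; simp [smul_smul, mul_inv_cancel₀ htk]
    have hkey : c = ∑ j ∈ Finset.range (d + 1), t k ^ j * eval (u k) (homogeneousComponent j p) := by
      rw [← hc (x k) (hx k), hxk]
      conv_lhs => rw [← MvPolynomial.sum_homogeneousComponent p]
      rw [map_sum]
      exact Finset.sum_congr rfl fun j _ =>
        eval_smul_isHomog (homogeneousComponent_isHomogeneous j p) _ _
    rw [Finset.sum_range_succ] at hkey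
    have hpow : ∀ j, j ≤ d → (t k)⁻¹ ^ d * t k ^ j = (t k)⁻¹ ^ (d - j) := by
      intro j hj
      have h3 : (t k)⁻¹ ^ d = (t k)⁻¹ ^ (d - j) * (t k)⁻¹ ^ j := by
        rw [← pow_add]; congr 1; omega
      have h4 : (t k)⁻¹ ^ j * t k ^ j = 1 := by
        rw [inv_pow, inv_mul_cancel₀ (pow_ne_zero _ htk)]
      rw [h3, mul_assoc, h4, mul_one]
    have := congrArg (fun z => (t k)⁻¹ ^ d * z) hkey
    simp only [mul_add, Finset.mul_sum] at this
    rw [← mul_assoc, hpow d le_rfl, Nat.sub_self, pow_zero, one_mul] at this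
    have h2 : ∑ j ∈ Finset.range d, (t k)⁻¹ ^ d * (t k ^ j * eval (u k) (homogeneousComponent j p))
        = ∑ j ∈ Finset.range d, (t k)⁻¹ ^ (d - j) * eval (u k) (homogeneousComponent j p) := by
      refine Finset.sum_congr rfl fun j hj => ?_
      rw [← mul_assoc, hpow j (le_of_lt (Finset.mem_range.mp hj))]
    rw [h2] at this
    linarith [this]
  have htinv : Tendsto (fun k => (t k)⁻¹) atTop (nhds 0) := ht.inv_tendsto_atTop
  have hlim2 : Tendsto (fun k => eval (u k) (homogeneousComponent d p)) atTop (nhds 0) := by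
    have hA : Tendsto (fun k => (t k)⁻¹ ^ d * c) atTop (nhds 0) := by
      have := (htinv.pow d).mul_const c
      simpa [zero_pow (by omega : d ≠ 0)] using this
    have hB : Tendsto (fun k => ∑ j ∈ Finset.range d,
        (t k)⁻¹ ^ (d - j) * eval (u k) (homogeneousComponent j p)) atTop (nhds 0) := by
      have : Tendsto (fun k => ∑ j ∈ Finset.range d,
          (t k)⁻¹ ^ (d - j) * eval (u k) (homogeneousComponent j p)) atTop
          (nhds (∑ j ∈ Finset.range d, 0)) := by
        refine tendsto_finset_sum _ fun j hj => ?_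
        have hdj : d - j ≠ 0 := by
          have := Finset.mem_range.mp hj; omega
        have h1 : Tendsto (fun k => (t k)⁻¹ ^ (d - j)) atTop (nhds 0) := by
          have := htinv.pow (d - j)
          simpa [zero_pow hdj] using this
        have h2 : Tendsto (fun k => eval (u k) (homogeneousComponent j p)) atTop
            (nhds (eval v (homogeneousComponent j p))) :=
          ((MvPolynomial.continuous_eval _).tendsto v).comp hlim
        simpa using h1.mul h2
      simpa using this
    have := hA.sub hB
    rw [sub_zero] at this
    exact this.congr' (by filter_upwards [hev] with k hk using hk.symm)
  exact tendsto_nhds_unique hlim1 hlim2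

/-- If `p` is constant on a nonempty set `A`, then `recPoly p` attains its minimum
on the asymptotic cone of `A`. -/
lemma solmin_of_const {n : ℕ} {A : Set (Fin n → ℝ)} (hA : A.Nonempty)
    {p : MvPolynomial (Fin n) ℝ} {c : ℝ} (hc : ∀ x ∈ A, eval x p = c) :
    (SOLmin (asymCone A) (recPoly p)).Nonempty := by
  refine ⟨0, zero_mem_asymCone_s9 hA, ?_⟩
  rcases Nat.eq_zero_or_pos p.totalDegree with h0 | h1
  · intro y _
    simp only [recPoly, h0, homogeneousComponent_zero, eval_C, le_refl]
  · intro y hy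
    rw [recPoly_eq_zero_on_asymCone h1 hc (zero_mem_asymCone_s9 hA),
      recPoly_eq_zero_on_asymCone h1 hc hy]

lemma asymCone_mono {n : ℕ} {A B : Set (Fin n → ℝ)} (h : A ⊆ B) :
    asymCone A ⊆ asymCone B := by
  rintro v ⟨t, x, ht, hx, hlim⟩
  exact ⟨t, x, ht, fun k => h (hx k), hlim⟩

theorem stmt9 {n q : ℕ} (K : Set (Fin n → ℝ)) (hKne : K.Nonempty) (hKcl : IsClosed K)
    (f : Fin q → MvPolynomial (Fin n) ℝ) (hdeg : ∀ i, 1 ≤ (f i).totalDegree) :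
    ((SOLs K (fun i x => eval x (f i))).Nonempty →
      ∃ xbar ∈ K, ∃ S : Set (Fin n → ℝ), S.Nonempty ∧ IsClosed S ∧
        asymCone {x ∈ K | ∀ j, eval x (f j) ≤ eval xbar (f j)} ⊆ asymCone S ∧
        asymCone S ⊆ asymCone K ∧
        ∀ lam : Fin q → ℝ, (∀ i, 0 ≤ lam i) → lam ≠ 0 →
          (SOLmin (asymCone S)
            (recPoly (∑ i, MvPolynomial.C (lam i) * f i))).Nonempty) ∧
    ((SOLw K (fun i x => eval x (f i))).Nonempty →
      ∃ xbar ∈ K, ∃ S : Set (Fin n → ℝ), S.Nonempty ∧ IsClosed S ∧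
        asymCone {x ∈ K | ∀ j, eval x (f j) ≤ eval xbar (f j)} ⊆ asymCone S ∧
        asymCone S ⊆ asymCone K ∧
        ∃ lam : Fin q → ℝ, (∀ i, 0 ≤ lam i) ∧ lam ≠ 0 ∧
          (SOLmin (asymCone S)
            (recPoly (∑ i, MvPolynomial.C (lam i) * f i))).Nonempty) := by
  -- sublevel sets
  set Ksub : (Fin n → ℝ) → Set (Fin n → ℝ) :=
    fun b => {x ∈ K | ∀ j, eval x (f j) ≤ eval b (f j)} with hKsub
  have hKsubCl : ∀ b, IsClosed (Ksub b) := by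
    intro b
    have : Ksub b = K ∩ ⋂ j, {x | eval x (f j) ≤ eval b (f j)} := by
      ext x; simp [hKsub, Set.mem_iInter]
    rw [this]
    exact hKcl.inter (isClosed_iInter fun j =>
      isClosed_le (MvPolynomial.continuous_eval _) continuous_const)
  have hKsubSub : ∀ b, Ksub b ⊆ K := fun b x hx => hx.1
  have hmemKsub : ∀ b ∈ K, b ∈ Ksub b := fun b hb => ⟨hb, fun j => le_rfl⟩
  constructor
  · -- Pareto case
    rintro ⟨a, haK, haP⟩
    have hconst : ∀ x ∈ Ksub a, ∀ i, eval x (f i) = eval a (f i) := by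
      intro x hx i
      by_contra hne
      exact haP ⟨x, hx.1, hx.2, ⟨i, hne⟩⟩
    refine ⟨a, haK, Ksub a, ⟨a, hmemKsub a haK⟩, hKsubCl a, subset_rfl,
      asymCone_mono (hKsubSub a), ?_⟩
    intro lam _ _
    refine solmin_of_const ⟨a, hmemKsub a haK⟩ (c := ∑ i, lam i * eval a (f i)) ?_
    intro x hx
    simp only [map_sum, eval_mul, eval_C]
    exact Finset.sum_congr rfl fun i _ => by rw [hconst x hx i]
  · -- weak Pareto case
    rintro ⟨a, haK, haW⟩
    -- key claim: there is b ∈ K and an index i0 such that f i0 is constant on Ksub b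
    have key : ∀ (J : Finset (Fin q)) (b : Fin n → ℝ), b ∈ K →
        (∀ x ∈ Ksub b, ∃ i ∈ J, eval x (f i) = eval b (f i)) →
        ∃ b' ∈ K, ∃ i0 : Fin q, ∀ x ∈ Ksub b', eval x (f i0) = eval b' (f i0) := by
      intro J
      induction J using Finset.strongInduction with
      | _ J ih =>
        intro b hbK hinv
        by_cases hex : ∃ i0 ∈ J, ∀ x ∈ Ksub b, eval x (f i0) = eval b (f i0)
        · obtain ⟨i0, _, h⟩ := hex
          exact ⟨b, hbK, i0, h⟩
        · push_neg at hex
          obtain ⟨i1, hi1J, _⟩ := hinv b (hmemKsub b hbK)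
          obtain ⟨b1, hb1, hb1ne⟩ := by
            have := hex i1 hi1J
            exact this
          have hb1lt : eval b1 (f i1) < eval b (f i1) :=
            lt_of_le_of_ne (hb1.2 i1) hb1ne
          refine ih (J.erase i1) (Finset.erase_ssubset hi1J) b1 hb1.1 ?_
          intro x hx
          have hxb : x ∈ Ksub b :=
            ⟨hx.1, fun j => le_trans (hx.2 j) (hb1.2 j)⟩
          obtain ⟨i, hiJ, hieq⟩ := hinv x hxb
          have hne : i ≠ i1 := by
            intro h
            rw [h] at hieq
            exact absurd hieq (ne_of_lt (lt_of_le_of_lt (hx.2 i1) hb1lt))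
          refine ⟨i, Finset.mem_erase.mpr ⟨hne, hiJ⟩, ?_⟩
          have h1 : eval x (f i) ≤ eval b1 (f i) := hx.2 i
          have h2 : eval b1 (f i) ≤ eval b (f i) := hb1.2 i
          linarith [hieq.ge, hieq.le]
    have hbase : ∀ x ∈ Ksub a, ∃ i ∈ (Finset.univ : Finset (Fin q)),
        eval x (f i) = eval a (f i) := by
      intro x hx
      have : ¬ ∀ i, eval x (f i) < eval a (f i) := fun h => haW ⟨x, hx.1, h⟩
      push_neg at this
      obtain ⟨i, hi⟩ := this
      exact ⟨i, Finset.mem_univ i, le_antisymm (hx.2 i) hi⟩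
    obtain ⟨b, hbK, i0, hconst⟩ := key Finset.univ a haK hbase
    refine ⟨b, hbK, Ksub b, ⟨b, hmemKsub b hbK⟩, hKsubCl b, subset_rfl,
      asymCone_mono (hKsubSub b), Pi.single i0 1, ?_, ?_, ?_⟩
    · intro i
      by_cases h : i = i0 <;> simp [h, Pi.single_apply]
    · intro h
      have := congrFun h i0
      simp at this
    · have hsum : (∑ i, (MvPolynomial.C ((Pi.single i0 1 : Fin q → ℝ) i) : MvPolynomial (Fin n) ℝ) * f i) = f i0 := by
        rw [Finset.sum_eq_single i0]
        · simp
        · intro i _ hne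
          simp [Pi.single_apply, hne]
        · intro h; exact absurd (Finset.mem_univ i0) h
      rw [hsum]
      exact solmin_of_const ⟨b, hmemKsub b hbK⟩ (c := eval b (f i0)) hconst
end
end

section
/- Let K ⊆ ℝⁿ be a nonempty closed set, f = (f_1,…,f_q) a vector polynomial, x̄ ∈ K, and λ ∈ ℝ^q with λ_i ≥ 0 for all i and λ ≠ 0. If there exists a closed set S ⊆ ℝⁿ with (K_x̄)_∞ ⊆ S_∞ ⊆ K_∞ such that at least one of the following holds: (i) SOL(S_∞, (Σ_{i=1}^q λ_i f_i)^∞) = {0}; (ii) SOL^s(S_∞, f^∞) = {0}; (iii) SOL^w(S_∞, f^∞) = {0}, then SOL^s(K, f) is nonempty, i.e., the polynomial vector optimization problem of minimizing f over K admits a Pareto efficient solution. -/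
open Filter Topology MvPolynomial Bornology

noncomputable section

/-- Evaluation of a homogeneous polynomial at a scalar multiple. -/
lemma eval_smul_of_isHomogeneous {N m : ℕ} {p : MvPolynomial (Fin N) ℝ}
    (hp : p.IsHomogeneous m) (c : ℝ) (x : Fin N → ℝ) :
    eval (c • x) p = c ^ m * eval x p := by
  rw [eval_eq, eval_eq, Finset.mul_sum]
  refine Finset.sum_congr rfl fun d hd => ?_
  have hdeg : (∑ i ∈ d.support, d i) = m := by
    have := hp (MvPolynomial.mem_support_iff.mp hd)
    rwa [Pi.one_def, ← Finsupp.degree_eq_weight_one, Finsupp.degree_apply] at this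
  have : ∏ i ∈ d.support, (c • x) i ^ d i
      = c ^ m * ∏ i ∈ d.support, x i ^ d i := by
    simp only [Pi.smul_apply, smul_eq_mul, mul_pow]
    rw [Finset.prod_mul_distrib, Finset.prod_pow_eq_pow_sum, hdeg]
  rw [this]; ring

lemma recPoly_zero_of_pos {N : ℕ} (p : MvPolynomial (Fin N) ℝ)
    (h : 1 ≤ p.totalDegree) : recPoly p 0 = 0 := by
  have h0 := eval_smul_of_isHomogeneous
    (homogeneousComponent_isHomogeneous p.totalDegree p) (0 : ℝ) (0 : Fin N → ℝ)
  rw [smul_zero, zero_pow (by omega)] at h0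
  simpa [recPoly] using h0

/-- The key limit lemma: scaled evaluations converge to the recession polynomial. -/
lemma tendsto_scaled_eval {N : ℕ} (p : MvPolynomial (Fin N) ℝ) {t : ℕ → ℝ}
    {x : ℕ → Fin N → ℝ} {v : Fin N → ℝ} (ht : Tendsto t atTop atTop)
    (hx : Tendsto (fun k => (t k)⁻¹ • x k) atTop (𝓝 v)) :
    Tendsto (fun k => ((t k) ^ p.totalDegree)⁻¹ * eval (x k) p) atTop
      (𝓝 (recPoly p v)) := by
  set d := p.totalDegree with hd
  set u : ℕ → Fin N → ℝ := fun k => (t k)⁻¹ • x k with hu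
  set F : ℕ → ℕ → ℝ := fun j k =>
    ((t k)⁻¹) ^ (d - j) * eval (u k) (homogeneousComponent j p) with hF
  have heq : (fun k => ((t k) ^ d)⁻¹ * eval (x k) p)
      =ᶠ[atTop] fun k => ∑ j ∈ Finset.range (d + 1), F j k := by
    filter_upwards [ht.eventually_gt_atTop 0] with k hk
    have htk : t k ≠ 0 := ne_of_gt hk
    have hxk : x k = t k • u k := by
      rw [hu]; simp [smul_smul, mul_inv_cancel₀ htk]
    have : eval (x k) p = ∑ j ∈ Finset.range (d + 1),
        (t k) ^ j * eval (u k) (homogeneousComponent j p) := by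
      conv_lhs => rw [hxk, ← sum_homogeneousComponent p]
      rw [map_sum]
      exact Finset.sum_congr rfl fun j _ =>
        eval_smul_of_isHomogeneous (homogeneousComponent_isHomogeneous j p) _ _
    rw [this, Finset.mul_sum]
    refine Finset.sum_congr rfl fun j hj => ?_
    have hjd : j ≤ d := Nat.lt_succ_iff.mp (Finset.mem_range.mp hj)
    have hpow : (t k) ^ d = (t k) ^ (d - j) * (t k) ^ j := by
      rw [← pow_add, Nat.sub_add_cancel hjd]
    show _ = (t k)⁻¹ ^ (d - j) * eval (u k) (homogeneousComponent j p)
    rw [hpow, mul_inv, ← inv_pow, mul_assoc, inv_mul_cancel_left₀ (pow_ne_zero j htk)]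
  have hsum : Tendsto (fun k => ∑ j ∈ Finset.range (d + 1), F j k) atTop
      (𝓝 (recPoly p v)) := by
    have hlim : ∀ j ∈ Finset.range (d + 1), Tendsto (F j) atTop
        (𝓝 (if j = d then recPoly p v else 0)) := by
      intro j hj
      have hjd : j ≤ d := Nat.lt_succ_iff.mp (Finset.mem_range.mp hj)
      have he : Tendsto (fun k => eval (u k) (homogeneousComponent j p)) atTop
          (𝓝 (eval v (homogeneousComponent j p))) :=
        ((MvPolynomial.continuous_eval _).tendsto v).comp hx
      by_cases hjc : j = d
      · subst hjc
        simp only [hF, Nat.sub_self, pow_zero, one_mul, if_pos rfl]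
        exact he
      · have hdj : d - j ≠ 0 := by omega
        have h0 : Tendsto (fun k => ((t k)⁻¹) ^ (d - j)) atTop (𝓝 0) := by
          have := (ht.inv_tendsto_atTop).pow (d - j)
          simpa [zero_pow hdj] using this
        have := h0.mul he
        simpa [hF, hjc] using this
    have := tendsto_finset_sum _ hlim
    have hval : (∑ j ∈ Finset.range (d + 1),
        (if j = d then recPoly p v else 0)) = recPoly p v := by
      rw [Finset.sum_ite_eq' (Finset.range (d + 1)) d (fun _ => recPoly p v)]
      simp
    rwa [hval] at this
  exact hsum.congr' heq.symm

theorem stmt13 {n q : ℕ} (K : Set (Fin n → ℝ)) (hKne : K.Nonempty) (hKcl : IsClosed K)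
    (f : Fin q → MvPolynomial (Fin n) ℝ) (hdeg : ∀ i, 1 ≤ (f i).totalDegree)
    (xbar : Fin n → ℝ) (hx : xbar ∈ K)
    (lam : Fin q → ℝ) (hlam : ∀ i, 0 ≤ lam i) (hlam0 : lam ≠ 0)
    (hS : ∃ S : Set (Fin n → ℝ), IsClosed S ∧
      asymCone {x ∈ K | ∀ j, eval x (f j) ≤ eval xbar (f j)} ⊆ asymCone S ∧
      asymCone S ⊆ asymCone K ∧
      (SOLmin (asymCone S) (recPoly (∑ i, MvPolynomial.C (lam i) * f i)) = {0} ∨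
       SOLs (asymCone S) (fun i => recPoly (f i)) = {0} ∨
       SOLw (asymCone S) (fun i => recPoly (f i)) = {0})) :
    (SOLs K (fun i x => eval x (f i))).Nonempty := by
  obtain ⟨S, hScl, hsub1, hsub2, hcase⟩ := hS
  set Kb : Set (Fin n → ℝ) := {x ∈ K | ∀ j, eval x (f j) ≤ eval xbar (f j)} with hKb
  have hxbKb : xbar ∈ Kb := ⟨hx, fun j => le_refl _⟩
  have hKbcl : IsClosed Kb := by
    have : Kb = K ∩ ⋂ j, {x | eval x (f j) ≤ eval xbar (f j)} := by
      ext y; simp [hKb, Set.mem_iInter]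
    rw [this]
    exact hKcl.inter (isClosed_iInter fun j =>
      isClosed_le (MvPolynomial.continuous_eval _) continuous_const)
  -- Boundedness of the sublevel set
  have hKbbd : Bornology.IsBounded Kb := by
    by_contra hub
    rw [isBounded_iff_forall_norm_le] at hub
    push_neg at hub
    choose x hxK hxn using fun k : ℕ => hub (k : ℝ)
    set t : ℕ → ℝ := fun k => ‖x k‖ with htdef
    have htpos : ∀ k, 0 < t k := fun k => lt_of_le_of_lt (Nat.cast_nonneg k) (hxn k)
    set u : ℕ → Fin n → ℝ := fun k => (t k)⁻¹ • x k with hudef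
    have hus : ∀ k, u k ∈ Metric.sphere (0 : Fin n → ℝ) 1 := by
      intro k
      rw [mem_sphere_zero_iff_norm, norm_smul, norm_inv, norm_norm]
      exact inv_mul_cancel₀ (htpos k).ne'
    obtain ⟨v, hv, φ, hφ, hvlim⟩ :=
      (isCompact_sphere (0 : Fin n → ℝ) 1).tendsto_subseq hus
    have hvn : ‖v‖ = 1 := mem_sphere_zero_iff_norm.mp hv
    have hv0 : v ≠ 0 := by
      intro h; rw [h, norm_zero] at hvn; exact one_ne_zero hvn.symm
    have htφ : Tendsto (fun k => t (φ k)) atTop atTop := by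
      refine tendsto_atTop_mono (fun k => ?_) tendsto_natCast_atTop_atTop
      calc (k : ℝ) ≤ (φ k : ℝ) := Nat.cast_le.mpr hφ.le_apply
        _ ≤ t (φ k) := (hxn (φ k)).le
    have hxφ : Tendsto (fun k => (t (φ k))⁻¹ • x (φ k)) atTop (𝓝 v) := hvlim
    have hvA : v ∈ asymCone Kb :=
      ⟨fun k => t (φ k), fun k => x (φ k), htφ, fun k => hxK (φ k), hxφ⟩
    have hvS : v ∈ asymCone S := hsub1 hvA
    have key : ∀ p : MvPolynomial (Fin n) ℝ,
        (∀ k, eval (x k) p ≤ eval xbar p) → 1 ≤ p.totalDegree → recPoly p v ≤ 0 := by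
      intro p hle hdp
      have hl := tendsto_scaled_eval p htφ hxφ
      have h0 : Tendsto (fun k => ((t (φ k)) ^ p.totalDegree)⁻¹ * eval xbar p)
          atTop (𝓝 0) := by
        have hp : Tendsto (fun k => (t (φ k)) ^ p.totalDegree) atTop atTop :=
          (tendsto_pow_atTop (by omega : p.totalDegree ≠ 0)).comp htφ
        have := hp.inv_tendsto_atTop.mul_const (eval xbar p)
        simpa using this
      refine le_of_tendsto_of_tendsto hl h0 ?_
      filter_upwards [htφ.eventually_gt_atTop 0] with k hk
      exact mul_le_mul_of_nonneg_left (hle (φ k)) (by positivity)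
    have hfle : ∀ i, recPoly (f i) v ≤ 0 :=
      fun i => key (f i) (fun k => (hxK k).2 i) (hdeg i)
    have hf0 : ∀ i, recPoly (f i) 0 = 0 :=
      fun i => recPoly_zero_of_pos (f i) (hdeg i)
    rcases hcase with hc | hc | hc
    · -- scalarized minimum case
      set P : MvPolynomial (Fin n) ℝ := ∑ i, MvPolynomial.C (lam i) * f i with hP
      have hevalP : ∀ y, eval y P = ∑ i, lam i * eval y (f i) := by
        intro y; simp [hP]
      have h0mem : (0 : Fin n → ℝ) ∈ SOLmin (asymCone S) (recPoly P) := by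
        rw [hc]; rfl
      by_cases hD : P.totalDegree = 0
      · have hval : ∀ y : Fin n → ℝ, recPoly P y = MvPolynomial.coeff 0 P := by
          intro y; simp [recPoly, hD, homogeneousComponent_zero]
        have : v ∈ SOLmin (asymCone S) (recPoly P) :=
          ⟨hvS, fun y _ => by rw [hval v, hval y]⟩
        rw [hc] at this
        exact hv0 this
      · have hD1 : 1 ≤ P.totalDegree := Nat.one_le_iff_ne_zero.mpr hD
        have hPv : recPoly P v ≤ 0 := by
          refine key P (fun k => ?_) hD1
          rw [hevalP, hevalP]
          exact Finset.sum_le_sum fun i _ =>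
            mul_le_mul_of_nonneg_left ((hxK k).2 i) (hlam i)
        have hP0 : recPoly P 0 = 0 := recPoly_zero_of_pos P hD1
        have : v ∈ SOLmin (asymCone S) (recPoly P) := by
          refine ⟨hvS, fun y hy => ?_⟩
          have h1' := h0mem.2 v hvS
          have h2' := h0mem.2 y hy
          rw [hP0] at h1' h2'
          linarith
        rw [hc] at this
        exact hv0 this
    · -- Pareto case
      have h0mem : (0 : Fin n → ℝ) ∈ SOLs (asymCone S) (fun i => recPoly (f i)) := by
        rw [hc]; rfl
      have hfv0 : ∀ i, recPoly (f i) v = 0 := by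
        by_contra hne
        push_neg at hne
        obtain ⟨i, hi⟩ := hne
        exact h0mem.2 ⟨v, hvS, fun j => by
          show recPoly (f j) v ≤ recPoly (f j) 0
          rw [hf0 j]; exact hfle j,
          ⟨i, by show recPoly (f i) v ≠ recPoly (f i) 0; rw [hf0 i]; exact hi⟩⟩
      have : v ∈ SOLs (asymCone S) (fun i => recPoly (f i)) := by
        refine ⟨hvS, ?_⟩
        rintro ⟨y, hyS, hyle, i, hine⟩
        exact h0mem.2 ⟨y, hyS, fun j => by
          show recPoly (f j) y ≤ recPoly (f j) 0
          rw [hf0 j, ← hfv0 j]; exact hyle j,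
          ⟨i, by show recPoly (f i) y ≠ recPoly (f i) 0
                 rw [hf0 i, ← hfv0 i]; exact hine⟩⟩
      rw [hc] at this
      exact hv0 this
    · -- weak Pareto case
      have h0mem : (0 : Fin n → ℝ) ∈ SOLw (asymCone S) (fun i => recPoly (f i)) := by
        rw [hc]; rfl
      have : v ∈ SOLw (asymCone S) (fun i => recPoly (f i)) := by
        refine ⟨hvS, ?_⟩
        rintro ⟨y, hyS, hylt⟩
        exact h0mem.2 ⟨y, hyS, fun j => by
          show recPoly (f j) y < recPoly (f j) 0
          rw [hf0 j]; exact lt_of_lt_of_le (hylt j) (hfle j)⟩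
      rw [hc] at this
      exact hv0 this
  -- Compactness and existence of a Pareto efficient solution
  have hKbcp : IsCompact Kb := Metric.isCompact_of_isClosed_isBounded hKbcl hKbbd
  have hcont : Continuous fun y : Fin n → ℝ => ∑ i, eval y (f i) :=
    continuous_finset_sum _ fun i _ => MvPolynomial.continuous_eval _
  obtain ⟨z, hzK, hz⟩ := hKbcp.exists_isMinOn ⟨xbar, hxbKb⟩ hcont.continuousOn
  refine ⟨z, hzK.1, ?_⟩
  rintro ⟨y, hyK, hyle, i, hine⟩
  have hyKb : y ∈ Kb := ⟨hyK, fun j => le_trans (hyle j) (hzK.2 j)⟩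
  have hlt : ∑ i, eval y (f i) < ∑ i, eval z (f i) :=
    Finset.sum_lt_sum (fun j _ => hyle j)
      ⟨i, Finset.mem_univ i, lt_of_le_of_ne (hyle i) hine⟩
  exact absurd (hz hyKb) (not_le.mpr hlt)
end
end

section
/- Let K ⊆ ℝⁿ be a nonempty closed set and f = (f_1,…,f_q) a vector polynomial. If there exists a closed set S ⊆ ℝⁿ with K_∞ ∩ (⋃_{i=1}^q {x ∈ ℝⁿ : (f_i)^∞(x) ≤ 0}) ⊆ S_∞ ⊆ K_∞ such that SOL^w(S_∞, f^∞) = {0}, then SOL^s(K, f) is nonempty and bounded. -/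
open Filter Topology MvPolynomial Bornology

noncomputable section

set_option maxHeartbeats 1000000

namespace Stmt14Aux

variable {n : ℕ}

lemma eval_smul_isHomogeneous {m : ℕ} (φ : MvPolynomial (Fin n) ℝ)
    (hφ : φ.IsHomogeneous m) (r : ℝ) (x : Fin n → ℝ) :
    eval (r • x) φ = r ^ m * eval x φ := by
  rw [eval_eq, eval_eq, Finset.mul_sum]
  refine Finset.sum_congr rfl fun d hd => ?_
  have hdeg : ∑ i ∈ d.support, d i = m := by
    have h1 := hφ (mem_support_iff.1 hd)
    have h2 := DFunLike.congr_fun (Finsupp.degree_eq_weight_one (σ := Fin n)) d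
    replace h1 : Finsupp.degree d = m := h2.trans h1
    exact h1
  have h : ∀ i ∈ d.support, (r • x) i ^ d i = r ^ d i * x i ^ d i := by
    intro i _
    simp [Pi.smul_apply, smul_eq_mul, mul_pow]
  rw [Finset.prod_congr rfl h, Finset.prod_mul_distrib,
    Finset.prod_pow_eq_pow_sum, hdeg]
  ring

lemma recPoly_smul (p : MvPolynomial (Fin n) ℝ) (r : ℝ) (x : Fin n → ℝ) :
    recPoly p (r • x) = r ^ p.totalDegree * recPoly p x :=
  eval_smul_isHomogeneous _ (homogeneousComponent_isHomogeneous p.totalDegree p) r x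

lemma recPoly_zero {p : MvPolynomial (Fin n) ℝ} (hp : 1 ≤ p.totalDegree) :
    recPoly p 0 = 0 := by
  have h := recPoly_smul p 0 0
  rw [zero_smul, zero_pow (by omega), zero_mul] at h
  exact h

lemma continuous_recPoly (p : MvPolynomial (Fin n) ℝ) : Continuous (recPoly p) :=
  MvPolynomial.continuous_eval _

lemma smul_mem_asymCone {A : Set (Fin n → ℝ)} {w : Fin n → ℝ} (hw : w ∈ asymCone A)
    {r : ℝ} (hr : 0 < r) : r • w ∈ asymCone A := by
  obtain ⟨t, x, ht, hx, hlim⟩ := hw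
  refine ⟨fun k => t k / r, x, ht.atTop_div_const hr, hx, ?_⟩
  have h : ∀ k, (t k / r)⁻¹ • x k = r • ((t k)⁻¹ • x k) := by
    intro k
    rw [div_eq_mul_inv, mul_inv, inv_inv, mul_comm, smul_smul]
  simpa only [h] using hlim.const_smul r

lemma isClosed_asymCone (A : Set (Fin n → ℝ)) : IsClosed (asymCone A) := by
  refine isClosed_of_closure_subset fun v hv => ?_
  obtain ⟨u, hu, hulim⟩ := mem_closure_iff_seq_limit.1 hv
  have H : ∀ j : ℕ, ∃ (T : ℝ) (X : Fin n → ℝ), X ∈ A ∧ (j : ℝ) ≤ T ∧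
      dist (T⁻¹ • X) (u j) < 1 / (j + 1) := by
    intro j
    obtain ⟨t, x, ht, hx, hlim⟩ := hu j
    have h1 : ∀ᶠ k in atTop, (j : ℝ) ≤ t k := ht.eventually_ge_atTop _
    have h2 : ∀ᶠ k in atTop, dist ((t k)⁻¹ • x k) (u j) < 1 / (j + 1) :=
      (Metric.tendsto_nhds.1 hlim) _ (by positivity)
    obtain ⟨k, hk1, hk2⟩ := (h1.and h2).exists
    exact ⟨t k, x k, hx k, hk1, hk2⟩
  choose T X hXA hT hdist using H
  refine ⟨T, X, ?_, hXA, ?_⟩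
  · exact tendsto_atTop_mono hT tendsto_natCast_atTop_atTop
  · rw [tendsto_iff_dist_tendsto_zero]
    refine squeeze_zero (g := fun j : ℕ => 1 / ((j : ℝ) + 1) + dist (u j) v)
      (fun j => dist_nonneg) (fun j => ?_) ?_
    · exact (dist_triangle ((T j)⁻¹ • X j) (u j) v).trans
        (add_le_add (hdist j).le le_rfl)
    · have h1 : Tendsto (fun j : ℕ => 1 / ((j : ℝ) + 1)) atTop (𝓝 0) :=
        tendsto_one_div_add_atTop_nhds_zero_nat
      have h2 : Tendsto (fun j => dist (u j) v) atTop (𝓝 0) :=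
        tendsto_iff_dist_tendsto_zero.1 hulim
      simpa using h1.add h2

lemma exists_direction {B : Set (Fin n → ℝ)} (hB : ¬ IsBounded B) :
    ∃ (y : ℕ → (Fin n → ℝ)) (v : Fin n → ℝ), (∀ k, y k ∈ B) ∧
      (∀ k : ℕ, (k : ℝ) + 1 ≤ ‖y k‖) ∧ ‖v‖ = 1 ∧
      Tendsto (fun k => ‖y k‖) atTop atTop ∧
      Tendsto (fun k => ‖y k‖⁻¹ • y k) atTop (𝓝 v) := by
  have h : ∀ k : ℕ, ∃ x, x ∈ B ∧ (k : ℝ) + 1 ≤ ‖x‖ := by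
    intro k
    by_contra hcon
    push_neg at hcon
    exact hB (isBounded_iff_forall_norm_le.2 ⟨(k : ℝ) + 1, fun x hx => (hcon x hx).le⟩)
  choose z hzB hz using h
  have hz0 : ∀ k, ‖z k‖ ≠ 0 := by
    intro k
    have h1 := hz k
    have h2 : (0 : ℝ) < (k : ℝ) + 1 := by positivity
    linarith
  have husph : ∀ k, ‖z k‖⁻¹ • z k ∈ Metric.sphere (0 : Fin n → ℝ) 1 := by
    intro k
    rw [mem_sphere_zero_iff_norm, norm_smul, norm_inv, norm_norm,
      inv_mul_cancel₀ (hz0 k)]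
  obtain ⟨v, hv, φ, hφ, hconv⟩ :=
    (isCompact_sphere (0 : Fin n → ℝ) 1).tendsto_subseq husph
  refine ⟨z ∘ φ, v, fun k => hzB _, fun (k : ℕ) => ?_, mem_sphere_zero_iff_norm.1 hv, ?_, ?_⟩
  · have h1 : (k : ℝ) ≤ (φ k : ℝ) := by exact_mod_cast hφ.le_apply
    have := hz (φ k)
    simp only [Function.comp_apply]
    linarith
  · refine tendsto_atTop_mono (fun k => ?_) tendsto_natCast_atTop_atTop
    have h1 : (k : ℝ) ≤ (φ k : ℝ) := by exact_mod_cast hφ.le_apply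
    have := hz (φ k)
    simp only [Function.comp_apply]
    linarith
  · exact hconv

lemma recPoly_nonpos_of_bddAbove (p : MvPolynomial (Fin n) ℝ) (hp : 1 ≤ p.totalDegree)
    (y : ℕ → (Fin n → ℝ)) (v : Fin n → ℝ) (c : ℝ)
    (hy : ∀ k : ℕ, (k : ℝ) + 1 ≤ ‖y k‖)
    (hdir : Tendsto (fun k => ‖y k‖⁻¹ • y k) atTop (𝓝 v))
    (hbd : ∀ k, eval (y k) p ≤ c) :
    recPoly p v ≤ 0 := by
  by_contra hpos
  push_neg at hpos
  obtain ⟨σ, hσdef⟩ : ∃ s : ℕ → (Fin n → ℝ), s = fun k => ‖y k‖⁻¹ • y k := ⟨_, rfl⟩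
  rw [← hσdef] at hdir
  obtain ⟨d', hD⟩ : ∃ d', p.totalDegree = d' + 1 := ⟨p.totalDegree - 1, by omega⟩
  have hδpos' : 0 < recPoly p v / 2 := by positivity
  obtain ⟨δ, hδdef⟩ : ∃ d : ℝ, d = recPoly p v / 2 := ⟨_, rfl⟩
  have hδpos : 0 < δ := by rw [hδdef]; exact hδpos'
  have hnormpos : ∀ k : ℕ, (0 : ℝ) < ‖y k‖ := fun k =>
    lt_of_lt_of_le (by positivity) (hy k)
  have hgd : Tendsto (fun k => recPoly p (σ k)) atTop (𝓝 (recPoly p v)) :=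
    ((continuous_recPoly p).tendsto v).comp hdir
  have hev : ∀ᶠ k in atTop, δ ≤ recPoly p (σ k) :=
    hgd.eventually (eventually_ge_nhds (by rw [hδdef]; linarith))
  obtain ⟨M, hM⟩ : ∃ M, ∀ k, (∑ e ∈ Finset.range p.totalDegree,
      |eval (σ k) (homogeneousComponent e p)|) ≤ M := by
    have hSconv : Tendsto (fun k => ∑ e ∈ Finset.range p.totalDegree,
        |eval (σ k) (homogeneousComponent e p)|) atTop
        (𝓝 (∑ e ∈ Finset.range p.totalDegree, |eval v (homogeneousComponent e p)|)) := by
      apply tendsto_finset_sum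
      intro e _
      exact ((continuous_abs.comp (MvPolynomial.continuous_eval _)).tendsto v).comp hdir
    obtain ⟨M, hM⟩ := hSconv.bddAbove_range
    exact ⟨M, fun k => hM (Set.mem_range_self k)⟩
  have hM0 : 0 ≤ M := le_trans (Finset.sum_nonneg fun i _ => abs_nonneg _) (hM 0)
  have htermbd : ∀ (k : ℕ), ∀ e ∈ Finset.range p.totalDegree,
      |eval (σ k) (homogeneousComponent e p)| ≤ M := by
    intro k e he
    refine le_trans (Finset.single_le_sum (f := fun e =>
      |eval (σ k) (homogeneousComponent e p)|) (fun i _ => abs_nonneg _) he) (hM k)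
  have expand : ∀ k : ℕ, eval (y k) p =
      ∑ e ∈ Finset.range (p.totalDegree + 1),
        ‖y k‖ ^ e * eval (σ k) (homogeneousComponent e p) := by
    intro k
    have hy' : y k = ‖y k‖ • σ k := by
      rw [hσdef]; exact (smul_inv_smul₀ (hnormpos k).ne' (y k)).symm
    have hsum : (∑ e ∈ Finset.range (p.totalDegree + 1), homogeneousComponent e p) = p :=
      sum_homogeneousComponent p
    calc eval (y k) p
        = eval (‖y k‖ • σ k)
            (∑ e ∈ Finset.range (p.totalDegree + 1), homogeneousComponent e p) := by
          rw [hsum, ← hy']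
      _ = ∑ e ∈ Finset.range (p.totalDegree + 1),
            eval (‖y k‖ • σ k) (homogeneousComponent e p) := map_sum _ _ _
      _ = ∑ e ∈ Finset.range (p.totalDegree + 1),
            ‖y k‖ ^ e * eval (σ k) (homogeneousComponent e p) :=
          Finset.sum_congr rfl fun e _ =>
            eval_smul_isHomogeneous _ (homogeneousComponent_isHomogeneous e p) _ _
  obtain ⟨k, hk1, hk2⟩ :=
    (hev.and (eventually_ge_atTop ⌈((p.totalDegree : ℝ) * M + |c| + 1) / δ⌉₊)).exists
  have hρ1 : (1 : ℝ) ≤ ‖y k‖ := by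
    have h0 : (0 : ℝ) ≤ (k : ℝ) := Nat.cast_nonneg k
    linarith [hy k]
  have hρR : ((p.totalDegree : ℝ) * M + |c| + 1) / δ ≤ ‖y k‖ := by
    have h1 : ((p.totalDegree : ℝ) * M + |c| + 1) / δ
        ≤ (⌈((p.totalDegree : ℝ) * M + |c| + 1) / δ⌉₊ : ℝ) := Nat.le_ceil _
    have h2 : ((⌈((p.totalDegree : ℝ) * M + |c| + 1) / δ⌉₊ : ℕ) : ℝ) ≤ (k : ℝ) := by
      exact_mod_cast hk2
    linarith [hy k]
  have h3 : (p.totalDegree : ℝ) * M + |c| + 1 ≤ ‖y k‖ * δ := by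
    calc (p.totalDegree : ℝ) * M + |c| + 1
        = (((p.totalDegree : ℝ) * M + |c| + 1) / δ) * δ := by field_simp
      _ ≤ ‖y k‖ * δ := mul_le_mul_of_nonneg_right hρR hδpos.le
  have hterm : ∀ e ∈ Finset.range p.totalDegree,
      -(‖y k‖ ^ d' * M) ≤ ‖y k‖ ^ e * eval (σ k) (homogeneousComponent e p) := by
    intro e he
    have he' : e ≤ d' := by
      have := Finset.mem_range.1 he; omega
    have h4 : |‖y k‖ ^ e * eval (σ k) (homogeneousComponent e p)| ≤ ‖y k‖ ^ d' * M := by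
      rw [abs_mul, abs_of_nonneg (by positivity : (0:ℝ) ≤ ‖y k‖ ^ e)]
      exact mul_le_mul (pow_le_pow_right₀ hρ1 he') (htermbd k e he) (abs_nonneg _)
        (by positivity)
    linarith [neg_abs_le (‖y k‖ ^ e * eval (σ k) (homogeneousComponent e p)), h4]
  have hsumlb : -((p.totalDegree : ℝ) * (‖y k‖ ^ d' * M)) ≤
      ∑ e ∈ Finset.range p.totalDegree, ‖y k‖ ^ e * eval (σ k) (homogeneousComponent e p) := by
    calc -((p.totalDegree : ℝ) * (‖y k‖ ^ d' * M))
        = ∑ _e ∈ Finset.range p.totalDegree, -(‖y k‖ ^ d' * M) := by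
          rw [Finset.sum_const, Finset.card_range, nsmul_eq_mul]; ring
      _ ≤ _ := Finset.sum_le_sum hterm
  have hlead : ‖y k‖ ^ p.totalDegree * δ ≤ ‖y k‖ ^ p.totalDegree * recPoly p (σ k) :=
    mul_le_mul_of_nonneg_left hk1 (by positivity)
  have hcore : ‖y k‖ ^ p.totalDegree * δ - (p.totalDegree : ℝ) * (‖y k‖ ^ d' * M)
      ≤ eval (y k) p := by
    rw [expand k, Finset.sum_range_succ]
    have hrp : recPoly p (σ k) = eval (σ k) (homogeneousComponent p.totalDegree p) := rfl
    rw [← hrp]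
    linarith [hsumlb, hlead]
  have hpowD : ‖y k‖ ^ p.totalDegree = ‖y k‖ ^ d' * ‖y k‖ := by rw [hD]; ring
  have hpd' : (1 : ℝ) ≤ ‖y k‖ ^ d' := one_le_pow₀ hρ1
  have habs : c ≤ |c| := le_abs_self c
  have hfin := hbd k
  rw [hpowD] at hcore
  have hA : |c| + 1 ≤ ‖y k‖ * δ - (p.totalDegree : ℝ) * M := by linarith
  have hB : |c| + 1 ≤ ‖y k‖ ^ d' * (|c| + 1) :=
    le_mul_of_one_le_left (by positivity) hpd'
  have hC : ‖y k‖ ^ d' * (|c| + 1) ≤ ‖y k‖ ^ d' * (‖y k‖ * δ - (p.totalDegree : ℝ) * M) :=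
    mul_le_mul_of_nonneg_left hA (by positivity)
  have hE : ‖y k‖ ^ d' * (‖y k‖ * δ - (p.totalDegree : ℝ) * M)
      = ‖y k‖ ^ d' * ‖y k‖ * δ - (p.totalDegree : ℝ) * (‖y k‖ ^ d' * M) := by ring
  linarith

lemma pos_on_asymCone {q : ℕ} (hq : 0 < q) (f : Fin q → MvPolynomial (Fin n) ℝ)
    (hdeg : ∀ i, 1 ≤ (f i).totalDegree) (S : Set (Fin n → ℝ))
    (hsolw : SOLw (asymCone S) (fun i => recPoly (f i)) = {0}) :
    ∀ w ∈ asymCone S, w ≠ 0 → ∀ i, 0 < recPoly (f i) w := by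
  haveI : Nonempty (Fin q) := ⟨⟨0, hq⟩⟩
  have h0mem : (0 : Fin n → ℝ) ∈ SOLw (asymCone S) (fun i => recPoly (f i)) := by
    rw [hsolw]; rfl
  have hg0 : ∀ i, recPoly (f i) (0 : Fin n → ℝ) = 0 := fun i => recPoly_zero (hdeg i)
  have hnotallneg : ∀ z ∈ asymCone S, ¬ ∀ i, recPoly (f i) z < 0 := by
    intro z hz hcon
    exact h0mem.2 ⟨z, hz, fun i => by simp only []; rw [hg0 i]; exact hcon i⟩
  have hbeaten : ∀ w ∈ asymCone S, w ≠ 0 →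
      ∃ z ∈ asymCone S, ∀ i, recPoly (f i) z < recPoly (f i) w := by
    intro w hw hwne
    by_contra hcon
    have hmem : w ∈ SOLw (asymCone S) (fun i => recPoly (f i)) := ⟨hw, hcon⟩
    rw [hsolw] at hmem
    exact hwne hmem
  intro w hw hwne
  by_contra hneg
  push_neg at hneg
  obtain ⟨i₀, hi₀⟩ := hneg
  obtain ⟨z1, hz1C, hz1⟩ := hbeaten w hw hwne
  have hz1i₀ : recPoly (f i₀) z1 < 0 := lt_of_lt_of_le (hz1 i₀) hi₀
  obtain ⟨A, hAdef⟩ : ∃ A : Set (Fin n → ℝ),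
      A = {w' | w' ∈ asymCone S ∧ ∀ i, recPoly (f i) w' ≤ recPoly (f i) z1} := ⟨_, rfl⟩
  have hAbd : IsBounded A := by
    rw [hAdef]
    by_contra hnb
    obtain ⟨yy, vv, hyA, hynorm, hvnorm, hytend, hydir⟩ := exists_direction hnb
    have hnormpos : ∀ k : ℕ, (0 : ℝ) < ‖yy k‖ := fun k =>
      lt_of_lt_of_le (by positivity) (hynorm k)
    have hvC : vv ∈ asymCone S := by
      have hmem : ∀ k : ℕ, ‖yy k‖⁻¹ • yy k ∈ asymCone S := fun k =>
        smul_mem_asymCone (hyA k).1 (inv_pos.2 (hnormpos k))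
      exact (isClosed_asymCone S).mem_of_tendsto hydir (Eventually.of_forall hmem)
    have hvne : vv ≠ 0 := by
      intro h0; rw [h0] at hvnorm; simp at hvnorm
    have hvneg : ∀ i, recPoly (f i) vv ≤ 0 := by
      intro i
      have hsk : ∀ k : ℕ, recPoly (f i) (‖yy k‖⁻¹ • yy k)
          ≤ (‖yy k‖⁻¹) ^ (f i).totalDegree * recPoly (f i) z1 := by
        intro k
        rw [recPoly_smul]
        exact mul_le_mul_of_nonneg_left ((hyA k).2 i) (by positivity)
      have hlhs : Tendsto (fun k => recPoly (f i) (‖yy k‖⁻¹ • yy k)) atTop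
          (𝓝 (recPoly (f i) vv)) := ((continuous_recPoly (f i)).tendsto vv).comp hydir
      have hrhs : Tendsto (fun k : ℕ => (‖yy k‖⁻¹) ^ (f i).totalDegree * recPoly (f i) z1)
          atTop (𝓝 0) := by
        have h1 : Tendsto (fun k : ℕ => ‖yy k‖⁻¹) atTop (𝓝 0) :=
          tendsto_inv_atTop_zero.comp hytend
        have h2 : Tendsto (fun k : ℕ => (‖yy k‖⁻¹) ^ (f i).totalDegree) atTop (𝓝 0) := by
          have := h1.pow (f i).totalDegree
          rwa [zero_pow (by have := hdeg i; omega)] at this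
        simpa using h2.mul_const (recPoly (f i) z1)
      exact le_of_tendsto_of_tendsto' hlhs hrhs hsk
    obtain ⟨zz, hzzC, hzz⟩ := hbeaten vv hvC hvne
    exact hnotallneg zz hzzC (fun i => lt_of_lt_of_le (hzz i) (hvneg i))
  have hAcl : IsClosed A := by
    rw [hAdef]
    have heq : {w' | w' ∈ asymCone S ∧ ∀ i, recPoly (f i) w' ≤ recPoly (f i) z1}
        = asymCone S ∩ ⋂ i, {x | recPoly (f i) x ≤ recPoly (f i) z1} := by
      ext x; simp [Set.mem_iInter]
    rw [heq]
    exact (isClosed_asymCone S).inter (isClosed_iInter fun i =>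
      isClosed_le (continuous_recPoly _) continuous_const)
  have hAcpt : IsCompact A := Metric.isCompact_of_isClosed_isBounded hAcl hAbd
  have hz1A : z1 ∈ A := by rw [hAdef]; exact ⟨hz1C, fun i => le_rfl⟩
  obtain ⟨wbar, hwbarA, hmin⟩ := hAcpt.exists_isMinOn ⟨z1, hz1A⟩
    ((continuous_finset_sum Finset.univ fun i _ =>
      continuous_recPoly (f i)).continuousOn :
      ContinuousOn (fun x => ∑ i, recPoly (f i) x) A)
  rw [hAdef] at hwbarA
  have hwbarne : wbar ≠ 0 := by
    intro h0
    have h1 := hwbarA.2 i₀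
    rw [h0, hg0 i₀] at h1
    linarith
  obtain ⟨zb, hzbC, hzb⟩ := hbeaten wbar hwbarA.1 hwbarne
  have hzbA : zb ∈ A := by
    rw [hAdef]
    exact ⟨hzbC, fun i => le_trans (hzb i).le (hwbarA.2 i)⟩
  have h1 := hmin hzbA
  have h2 : ∑ i, recPoly (f i) zb < ∑ i, recPoly (f i) wbar :=
    Finset.sum_lt_sum_of_nonempty Finset.univ_nonempty (fun i _ => hzb i)
  simp only [Set.mem_setOf_eq] at h1
  exact absurd h1 (not_le.2 h2)

end Stmt14Aux

open Stmt14Aux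

theorem stmt14 {n q : ℕ} (K : Set (Fin n → ℝ)) (hKne : K.Nonempty) (hKcl : IsClosed K)
    (f : Fin q → MvPolynomial (Fin n) ℝ) (hdeg : ∀ i, 1 ≤ (f i).totalDegree)
    (hS : ∃ S : Set (Fin n → ℝ), IsClosed S ∧
      asymCone K ∩ (⋃ i, {x | recPoly (f i) x ≤ 0}) ⊆ asymCone S ∧
      asymCone S ⊆ asymCone K ∧
      SOLw (asymCone S) (fun i => recPoly (f i)) = {0}) :
    (SOLs K (fun i x => eval x (f i))).Nonempty ∧
      Bornology.IsBounded (SOLs K (fun i x => eval x (f i))) := by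
  obtain ⟨S, hScl, hsub1, hsub2, hsolw⟩ := hS
  rcases Nat.eq_zero_or_pos q with hq0 | hq
  · exfalso
    subst hq0
    have h0 : (0 : Fin n → ℝ) ∈ SOLw (asymCone S) (fun i => recPoly (f i)) := by
      rw [hsolw]; rfl
    exact h0.2 ⟨0, h0.1, fun i => i.elim0⟩
  haveI : Nonempty (Fin q) := ⟨⟨0, hq⟩⟩
  have hpos := pos_on_asymCone hq f hdeg S hsolw
  -- coercivity of each component on K
  have hsec : ∀ (i : Fin q) (c : ℝ), IsBounded {x | x ∈ K ∧ eval x (f i) ≤ c} := by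
    intro i c
    by_contra hnb
    obtain ⟨yy, vv, hyB, hynorm, hvnorm, hytend, hydir⟩ := exists_direction hnb
    have hvK : vv ∈ asymCone K :=
      ⟨fun k => ‖yy k‖, yy, hytend, fun k => (hyB k).1, hydir⟩
    have hvle : recPoly (f i) vv ≤ 0 :=
      recPoly_nonpos_of_bddAbove (f i) (hdeg i) yy vv c hynorm hydir (fun k => (hyB k).2)
    have hvS : vv ∈ asymCone S := hsub1 ⟨hvK, Set.mem_iUnion.2 ⟨i, hvle⟩⟩
    have hvne : vv ≠ 0 := by intro h0; rw [h0] at hvnorm; simp at hvnorm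
    have := hpos vv hvS hvne i
    linarith
  obtain ⟨x0, hx0⟩ := hKne
  have i1 : Fin q := ⟨0, hq⟩
  obtain ⟨L, hLdef⟩ : ∃ L : Set (Fin n → ℝ),
      L = {x | x ∈ K ∧ ∀ i, eval x (f i) ≤ eval x0 (f i)} := ⟨_, rfl⟩
  have hLbd : IsBounded L := by
    refine (hsec i1 (eval x0 (f i1))).subset ?_
    rw [hLdef]
    exact fun x hx => ⟨hx.1, hx.2 i1⟩
  have hLcl : IsClosed L := by
    rw [hLdef]
    have heq : {x | x ∈ K ∧ ∀ i, eval x (f i) ≤ eval x0 (f i)}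
        = K ∩ ⋂ i, {x | eval x (f i) ≤ eval x0 (f i)} := by
      ext x; simp [Set.mem_iInter]
    rw [heq]
    exact hKcl.inter (isClosed_iInter fun i =>
      isClosed_le (MvPolynomial.continuous_eval _) continuous_const)
  have hLne : x0 ∈ L := by rw [hLdef]; exact ⟨hx0, fun i => le_rfl⟩
  have hLcpt : IsCompact L := Metric.isCompact_of_isClosed_isBounded hLcl hLbd
  obtain ⟨xs, hxsL, hmin⟩ := hLcpt.exists_isMinOn ⟨x0, hLne⟩
    ((continuous_finset_sum Finset.univ fun i _ =>
      MvPolynomial.continuous_eval (f i)).continuousOn :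
      ContinuousOn (fun x => ∑ i, eval x (f i)) L)
  rw [hLdef] at hxsL
  constructor
  · refine ⟨xs, hxsL.1, ?_⟩
    rintro ⟨yv, hyK, hle, i2, hne⟩
    have hyL : yv ∈ L := by
      rw [hLdef]
      exact ⟨hyK, fun i => le_trans (hle i) (hxsL.2 i)⟩
    have h1 := hmin hyL
    simp only [Set.mem_setOf_eq] at h1
    have h2 : ∑ i, eval yv (f i) < ∑ i, eval xs (f i) :=
      Finset.sum_lt_sum (fun i _ => hle i)
        ⟨i2, Finset.mem_univ _, lt_of_le_of_ne (hle i2) hne⟩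
    exact absurd h1 (not_le.2 h2)
  · have hsubU : SOLs K (fun i x => eval x (f i))
        ⊆ ⋃ i, {x | x ∈ K ∧ eval x (f i) ≤ eval x0 (f i)} := by
      rintro x ⟨hxK, hnot⟩
      by_cases hall : ∀ i, eval x0 (f i) ≤ eval x (f i)
      · by_cases hex : ∃ i, eval x0 (f i) ≠ eval x (f i)
        · exact absurd ⟨x0, hx0, hall, hex⟩ hnot
        · push_neg at hex
          exact Set.mem_iUnion.2 ⟨i1, hxK, le_of_eq (hex i1).symm⟩
      · push_neg at hall
        obtain ⟨i2, hi2⟩ := hall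
        exact Set.mem_iUnion.2 ⟨i2, hxK, hi2.le⟩
    exact ((isBounded_iUnion).2 fun i => hsec i _).subset hsubU
end
end

section
/- Let K ⊆ ℝⁿ be a nonempty closed set and f = (f_1,…,f_q) a vector polynomial. Then SOL^s(K, f) ≠ ∅ in each of the following cases: (i) there exist x̄ ∈ K, a nonempty I ⊆ {1,…,q}, and λ ∈ ℝ^q with λ_i > 0 for i ∈ I and λ_i = 0 for i ∉ I, such that every f_i with i ∈ I is bounded from below on K_x̄ and SOL((K_x̄)_∞, (Σ_{i=1}^q λ_i f_i)^∞) is bounded; (ii) there exist x̄ ∈ K and λ ∈ ℝ^q with λ_i > 0 for all i, such that every f_i, i = 1,…,q, is bounded from below on K_x̄ and SOL((K_x̄)_∞, (Σ_{i=1}^q λ_i f_i)^∞) is bounded; (iii) there exist x̄ ∈ K and a nonempty I ⊆ {1,…,q} such that every f_i with i ∈ I is bounded from below on K_x̄ and SOL^w((K_x̄)_∞, f^∞) is bounded; (iv) there exists x̄ ∈ K such that every f_i, i = 1,…,q, is bounded from below on K_x̄ and SOL^s((K_x̄)_∞, f^∞) is bounded. -/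
open Filter Topology MvPolynomial Bornology

noncomputable section

namespace Stmt16Aux

variable {n q : ℕ}

lemma eval_smul_pow {φ : MvPolynomial (Fin n) ℝ} {m : ℕ} (hφ : φ.IsHomogeneous m)
    (c : ℝ) (x : Fin n → ℝ) : eval (c • x) φ = c ^ m * eval x φ := by
  rw [eval_eq', eval_eq', Finset.mul_sum]
  refine Finset.sum_congr rfl fun d hd => ?_
  have hdm : ∑ i, d i = m := by
    have h1 := hφ (mem_support_iff.mp hd)
    have h2 : (Finsupp.weight (1 : Fin n → ℕ)) d = ∑ i, d i := by
      rw [Finsupp.weight_apply, Finsupp.sum]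
      rw [Finset.sum_subset (Finset.subset_univ d.support)]
      · simp
      · intro i _ hi
        simp [Finsupp.notMem_support_iff.mp hi]
    rw [← h2]
    exact h1
  have : ∏ i, (c • x) i ^ d i = c ^ m * ∏ i, x i ^ d i := by
    simp only [Pi.smul_apply, smul_eq_mul, mul_pow]
    rw [Finset.prod_mul_distrib, Finset.prod_pow_eq_pow_sum, hdm]
  rw [this]; ring

lemma recPoly_smul (p : MvPolynomial (Fin n) ℝ) (c : ℝ) (v : Fin n → ℝ) :
    recPoly p (c • v) = c ^ p.totalDegree * recPoly p v :=
  eval_smul_pow (homogeneousComponent_isHomogeneous p.totalDegree p) c v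

lemma key_tendsto (p : MvPolynomial (Fin n) ℝ) {t : ℕ → ℝ} {x : ℕ → Fin n → ℝ}
    {v : Fin n → ℝ} (ht : Tendsto t atTop atTop)
    (hx : Tendsto (fun k => (t k)⁻¹ • x k) atTop (𝓝 v)) :
    Tendsto (fun k => eval (x k) p / t k ^ p.totalDegree) atTop (𝓝 (recPoly p v)) := by
  set d := p.totalDegree with hd
  set y := fun k => (t k)⁻¹ • x k with hy
  have hcont : ∀ m : ℕ, Tendsto (fun k => eval (y k) (homogeneousComponent m p)) atTop
      (𝓝 (eval v (homogeneousComponent m p))) := fun m =>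
    (MvPolynomial.continuous_eval (homogeneousComponent m p)).continuousAt.tendsto.comp hx
  have hsum : Tendsto
      (fun k => ∑ m ∈ Finset.range (d + 1), (t k ^ (d - m))⁻¹ * eval (y k) (homogeneousComponent m p))
      atTop
      (𝓝 (∑ m ∈ Finset.range (d + 1), (if m = d then (1:ℝ) else 0) * eval v (homogeneousComponent m p))) := by
    apply tendsto_finset_sum
    intro m hm
    refine Tendsto.mul ?_ (hcont m)
    by_cases h : m = d
    · subst h
      simp only [Nat.sub_self, pow_zero, inv_one, if_pos rfl]
      exact tendsto_const_nhds
    · have hlt : m < d := lt_of_le_of_ne (Nat.lt_succ_iff.mp (Finset.mem_range.mp hm)) h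
      simp only [if_neg h]
      exact (((tendsto_pow_atTop (n := d - m) (by omega)).comp ht)).inv_tendsto_atTop
  have hlim : (∑ m ∈ Finset.range (d + 1), (if m = d then (1:ℝ) else 0) * eval v (homogeneousComponent m p))
      = recPoly p v := by
    rw [Finset.sum_congr rfl (fun m _ => ?_)]
    · rw [Finset.sum_ite_eq' (Finset.range (d+1)) d (fun m => eval v (homogeneousComponent m p))]
      simp [recPoly, hd]
    · rw [ite_mul, one_mul, zero_mul]
  rw [← hlim]
  refine Tendsto.congr' ?_ hsum
  filter_upwards [ht.eventually_gt_atTop 0] with k hk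
  have hx' : x k = t k • y k := (smul_inv_smul₀ (ne_of_gt hk) (x k)).symm
  have : eval (x k) p = ∑ m ∈ Finset.range (d + 1), t k ^ m * eval (y k) (homogeneousComponent m p) := by
    conv_lhs => rw [hx', ← MvPolynomial.sum_homogeneousComponent p]
    rw [map_sum]
    exact Finset.sum_congr rfl fun m _ =>
      eval_smul_pow (homogeneousComponent_isHomogeneous m p) _ _
  rw [this, Finset.sum_div]
  refine (Finset.sum_congr rfl fun m hm => ?_).symm
  have hmd : m ≤ d := Nat.lt_succ_iff.mp (Finset.mem_range.mp hm)
  have hpd : t k ^ d = t k ^ m * t k ^ (d - m) := by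
    rw [← pow_add]; congr 1; omega
  rw [hpd, mul_div_mul_left _ _ (pow_ne_zero m (ne_of_gt hk)), div_eq_inv_mul]

lemma sign_lower {p : MvPolynomial (Fin n) ℝ} (hd : 1 ≤ p.totalDegree)
    {C : Set (Fin n → ℝ)} {B : ℝ} (hB : ∀ x ∈ C, B ≤ eval x p)
    {v : Fin n → ℝ} (hv : v ∈ asymCone C) : 0 ≤ recPoly p v := by
  obtain ⟨t, x, ht, hxC, hx⟩ := hv
  have hk := key_tendsto p ht hx
  have hpow : Tendsto (fun k => t k ^ p.totalDegree) atTop atTop :=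
    (tendsto_pow_atTop (by omega)).comp ht
  have h0 : Tendsto (fun k => B / t k ^ p.totalDegree) atTop (𝓝 0) :=
    tendsto_const_nhds.div_atTop hpow
  refine le_of_tendsto_of_tendsto h0 hk ?_
  filter_upwards [ht.eventually_gt_atTop 0] with k hk0
  have hp : (0:ℝ) < t k ^ p.totalDegree := pow_pos hk0 _
  gcongr
  exact hB _ (hxC k)

lemma sign_upper {p : MvPolynomial (Fin n) ℝ} (hd : 1 ≤ p.totalDegree)
    {C : Set (Fin n → ℝ)} {B : ℝ} (hB : ∀ x ∈ C, eval x p ≤ B)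
    {v : Fin n → ℝ} (hv : v ∈ asymCone C) : recPoly p v ≤ 0 := by
  obtain ⟨t, x, ht, hxC, hx⟩ := hv
  have hk := key_tendsto p ht hx
  have hpow : Tendsto (fun k => t k ^ p.totalDegree) atTop atTop :=
    (tendsto_pow_atTop (by omega)).comp ht
  have h0 : Tendsto (fun k => B / t k ^ p.totalDegree) atTop (𝓝 0) :=
    tendsto_const_nhds.div_atTop hpow
  refine le_of_tendsto_of_tendsto hk h0 ?_
  filter_upwards [ht.eventually_gt_atTop 0] with k hk0
  have hp : (0:ℝ) < t k ^ p.totalDegree := pow_pos hk0 _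
  gcongr
  exact hB _ (hxC k)

lemma smul_mem_asymCone {A : Set (Fin n → ℝ)} {v : Fin n → ℝ}
    (hv : v ∈ asymCone A) {c : ℝ} (hc : 0 < c) : c • v ∈ asymCone A := by
  obtain ⟨t, x, ht, hx, hlim⟩ := hv
  refine ⟨fun k => t k / c, x, ht.atTop_div_const hc, hx, ?_⟩
  have he : ∀ k, (t k / c)⁻¹ • x k = c • ((t k)⁻¹ • x k) := by
    intro k
    rw [div_eq_mul_inv, mul_inv, inv_inv, mul_comm, ← smul_smul]
  simp only [he]
  exact hlim.const_smul c

lemma exists_unit_dir {A : Set (Fin n → ℝ)} (h : ¬ IsBounded A) :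
    ∃ v : Fin n → ℝ, ‖v‖ = 1 ∧ v ∈ asymCone A := by
  have h' : ∀ k : ℕ, ∃ x ∈ A, (k : ℝ) < ‖x‖ := by
    intro k
    by_contra hc
    push_neg at hc
    exact h (isBounded_iff_forall_norm_le.mpr ⟨k, hc⟩)
  choose x hxA hxn using h'
  have hpos : ∀ k, 0 < ‖x k‖ := fun k => lt_of_le_of_lt (Nat.cast_nonneg k) (hxn k)
  set u := fun k => ‖x k‖⁻¹ • x k with hu
  have humem : ∀ k, u k ∈ Metric.sphere (0 : Fin n → ℝ) 1 := by
    intro k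
    rw [mem_sphere_zero_iff_norm, hu, norm_smul, norm_inv, norm_norm,
      inv_mul_cancel₀ (hpos k).ne']
  obtain ⟨v, hv, φ, hφ, hlim⟩ :=
    (isCompact_sphere (0 : Fin n → ℝ) 1).tendsto_subseq humem
  refine ⟨v, mem_sphere_zero_iff_norm.mp hv,
    fun k => ‖x (φ k)‖, fun k => x (φ k), ?_, fun k => hxA _, hlim⟩
  apply tendsto_atTop_mono (fun k => (hxn (φ k)).le)
  exact tendsto_natCast_atTop_atTop.comp hφ.tendsto_atTop

lemma not_bounded_of_smul {v : Fin n → ℝ} (hv : ‖v‖ = 1) {S : Set (Fin n → ℝ)}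
    (hS : ∀ c : ℝ, 0 < c → c • v ∈ S) : ¬ IsBounded S := by
  intro hb
  obtain ⟨R, hR⟩ := isBounded_iff_forall_norm_le.mp hb
  obtain ⟨c, hc⟩ := exists_nat_gt R
  have h1 : (0:ℝ) < c + 1 := by positivity
  have h2 := hR _ (hS (c + 1) h1)
  rw [norm_smul, hv, mul_one, Real.norm_eq_abs, abs_of_pos h1] at h2
  linarith

lemma main_core {K : Set (Fin n → ℝ)} (hKcl : IsClosed K)
    (f : Fin q → MvPolynomial (Fin n) ℝ) {xbar : Fin n → ℝ} (hxb : xbar ∈ K)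
    (hCb : IsBounded {x ∈ K | ∀ j, eval x (f j) ≤ eval xbar (f j)}) :
    (SOLs K (fun i x => eval x (f i))).Nonempty := by
  set Cs := {x ∈ K | ∀ j, eval x (f j) ≤ eval xbar (f j)} with hCs
  have hCcl : IsClosed Cs := by
    have : Cs = K ∩ ⋂ j, {x | eval x (f j) ≤ eval xbar (f j)} := by
      ext z; simp [hCs, Set.mem_iInter]
    rw [this]
    exact hKcl.inter (isClosed_iInter fun j =>
      isClosed_le (MvPolynomial.continuous_eval _) continuous_const)
  have hCcp : IsCompact Cs := Metric.isCompact_of_isClosed_isBounded hCcl hCb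
  have hxC : xbar ∈ Cs := ⟨hxb, fun j => le_refl _⟩
  have hFcont : Continuous fun x : Fin n → ℝ => ∑ i, eval x (f i) :=
    continuous_finset_sum _ fun i _ => MvPolynomial.continuous_eval _
  obtain ⟨x', hx'C, hmin⟩ := hCcp.exists_isMinOn ⟨xbar, hxC⟩ hFcont.continuousOn
  refine ⟨x', hx'C.1, ?_⟩
  rintro ⟨y, hyK, hle, i₁, hne⟩
  have hyC : y ∈ Cs := ⟨hyK, fun j => (hle j).trans (hx'C.2 j)⟩
  have hlt : ∑ i, eval y (f i) < ∑ i, eval x' (f i) :=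
    Finset.sum_lt_sum (fun i _ => hle i)
      ⟨i₁, Finset.mem_univ _, lt_of_le_of_ne (hle i₁) hne⟩
  exact absurd (isMinOn_iff.mp hmin y hyC) (not_le.mpr hlt)

lemma case_i {K : Set (Fin n → ℝ)} (hKcl : IsClosed K)
    (f : Fin q → MvPolynomial (Fin n) ℝ)
    {xbar : Fin n → ℝ} (hxb : xbar ∈ K) {I : Finset (Fin q)}
    {lam : Fin q → ℝ} (hpos : ∀ i ∈ I, 0 < lam i) (hzero : ∀ i ∉ I, lam i = 0)
    (hbdd : ∀ i ∈ I, ∃ m : ℝ, ∀ x ∈ {x ∈ K | ∀ j, eval x (f j) ≤ eval xbar (f j)},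
      m ≤ eval x (f i))
    (hsol : IsBounded (SOLmin (asymCone {x ∈ K | ∀ j, eval x (f j) ≤ eval xbar (f j)})
        (recPoly (∑ i, MvPolynomial.C (lam i) * f i)))) :
    (SOLs K (fun i x => eval x (f i))).Nonempty := by
  set Cs := {x ∈ K | ∀ j, eval x (f j) ≤ eval xbar (f j)} with hCs
  apply main_core hKcl f hxb
  by_contra hub
  obtain ⟨v, hv1, hvC⟩ := exists_unit_dir hub
  set P := ∑ i, MvPolynomial.C (lam i) * f i with hP
  have hg : ∀ x, eval x P = ∑ i, lam i * eval x (f i) := by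
    intro x; rw [hP, map_sum]
    exact Finset.sum_congr rfl fun i _ => by rw [map_mul, eval_C]
  choose! M hM using hbdd
  have hlam0 : ∀ i, 0 ≤ lam i := by
    intro i; by_cases hi : i ∈ I
    · exact (hpos i hi).le
    · rw [hzero i hi]
  have hB : ∀ x ∈ Cs, (∑ i, lam i * M i) ≤ eval x P := by
    intro x hx; rw [hg]
    refine Finset.sum_le_sum fun i _ => ?_
    by_cases hi : i ∈ I
    · exact mul_le_mul_of_nonneg_left (hM i hi x hx) (hpos i hi).le
    · simp [hzero i hi]
  have hUp : ∀ x ∈ Cs, eval x P ≤ eval xbar P := by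
    intro x hx; rw [hg, hg]
    exact Finset.sum_le_sum fun i _ =>
      mul_le_mul_of_nonneg_left (hx.2 i) (hlam0 i)
  have hmem : ∀ c : ℝ, 0 < c → c • v ∈ SOLmin (asymCone Cs) (recPoly P) := by
    rcases Nat.eq_zero_or_pos P.totalDegree with hd0 | hd1
    · have hconst : ∀ x : Fin n → ℝ, recPoly P x = MvPolynomial.coeff 0 P := by
        intro x; rw [recPoly, hd0, homogeneousComponent_zero, eval_C]
      intro c hc
      exact ⟨smul_mem_asymCone hvC hc, fun y _ => by rw [hconst, hconst]⟩
    · have hge : ∀ y ∈ asymCone Cs, 0 ≤ recPoly P y := fun y hy => sign_lower hd1 hB hy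
      have hv0 : recPoly P v = 0 := le_antisymm (sign_upper hd1 hUp hvC) (hge v hvC)
      intro c hc
      refine ⟨smul_mem_asymCone hvC hc, fun y hy => ?_⟩
      rw [recPoly_smul, hv0, mul_zero]
      exact hge y hy
  exact not_bounded_of_smul hv1 hmem hsol

lemma case_iii {K : Set (Fin n → ℝ)} (hKcl : IsClosed K)
    (f : Fin q → MvPolynomial (Fin n) ℝ) (hdeg : ∀ i, 1 ≤ (f i).totalDegree)
    {xbar : Fin n → ℝ} (hxb : xbar ∈ K) {I : Finset (Fin q)} (hIne : I.Nonempty)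
    (hbdd : ∀ i ∈ I, ∃ m : ℝ, ∀ x ∈ {x ∈ K | ∀ j, eval x (f j) ≤ eval xbar (f j)},
      m ≤ eval x (f i))
    (hsol : IsBounded (SOLw (asymCone {x ∈ K | ∀ j, eval x (f j) ≤ eval xbar (f j)})
        (fun i => recPoly (f i)))) :
    (SOLs K (fun i x => eval x (f i))).Nonempty := by
  set Cs := {x ∈ K | ∀ j, eval x (f j) ≤ eval xbar (f j)} with hCs
  obtain ⟨i₀, hi₀⟩ := hIne
  obtain ⟨m, hm⟩ := hbdd i₀ hi₀
  apply main_core hKcl f hxb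
  by_contra hub
  obtain ⟨v, hv1, hvC⟩ := exists_unit_dir hub
  have hge : ∀ y ∈ asymCone Cs, 0 ≤ recPoly (f i₀) y :=
    fun y hy => sign_lower (hdeg i₀) hm hy
  have hUp : ∀ x ∈ Cs, eval x (f i₀) ≤ eval xbar (f i₀) := fun x hx => hx.2 i₀
  have hv0 : recPoly (f i₀) v = 0 :=
    le_antisymm (sign_upper (hdeg i₀) hUp hvC) (hge v hvC)
  have hmem : ∀ c : ℝ, 0 < c → c • v ∈ SOLw (asymCone Cs) (fun i => recPoly (f i)) := by
    intro c hc
    refine ⟨smul_mem_asymCone hvC hc, ?_⟩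
    rintro ⟨y, hy, hylt⟩
    have h : recPoly (f i₀) y < recPoly (f i₀) (c • v) := hylt i₀
    rw [recPoly_smul, hv0, mul_zero] at h
    exact absurd h (not_lt.mpr (hge y hy))
  exact not_bounded_of_smul hv1 hmem hsol

lemma case_iv {K : Set (Fin n → ℝ)} (hKcl : IsClosed K)
    (f : Fin q → MvPolynomial (Fin n) ℝ) (hdeg : ∀ i, 1 ≤ (f i).totalDegree)
    {xbar : Fin n → ℝ} (hxb : xbar ∈ K)
    (hbdd : ∀ i, ∃ m : ℝ, ∀ x ∈ {x ∈ K | ∀ j, eval x (f j) ≤ eval xbar (f j)},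
      m ≤ eval x (f i))
    (hsol : IsBounded (SOLs (asymCone {x ∈ K | ∀ j, eval x (f j) ≤ eval xbar (f j)})
        (fun i => recPoly (f i)))) :
    (SOLs K (fun i x => eval x (f i))).Nonempty := by
  set Cs := {x ∈ K | ∀ j, eval x (f j) ≤ eval xbar (f j)} with hCs
  choose M hM using hbdd
  apply main_core hKcl f hxb
  by_contra hub
  obtain ⟨v, hv1, hvC⟩ := exists_unit_dir hub
  have hge : ∀ i, ∀ y ∈ asymCone Cs, 0 ≤ recPoly (f i) y :=
    fun i y hy => sign_lower (hdeg i) (hM i) hy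
  have hv0 : ∀ i, recPoly (f i) v = 0 := fun i =>
    le_antisymm (sign_upper (hdeg i) (fun x hx => hx.2 i) hvC) (hge i v hvC)
  have hmem : ∀ c : ℝ, 0 < c → c • v ∈ SOLs (asymCone Cs) (fun i => recPoly (f i)) := by
    intro c hc
    refine ⟨smul_mem_asymCone hvC hc, ?_⟩
    rintro ⟨y, hy, hyle, i₁, hne⟩
    have h : recPoly (f i₁) y ≤ recPoly (f i₁) (c • v) := hyle i₁
    have hne' : recPoly (f i₁) y ≠ recPoly (f i₁) (c • v) := hne
    rw [recPoly_smul, hv0 i₁, mul_zero] at h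
    rw [recPoly_smul, hv0 i₁, mul_zero] at hne'
    exact absurd (le_antisymm h (hge i₁ y hy)) hne'
  exact not_bounded_of_smul hv1 hmem hsol

end Stmt16Aux

theorem stmt16 {n q : ℕ} (K : Set (Fin n → ℝ)) (hKne : K.Nonempty) (hKcl : IsClosed K)
    (f : Fin q → MvPolynomial (Fin n) ℝ) (hdeg : ∀ i, 1 ≤ (f i).totalDegree) :
    ((∃ xbar ∈ K, ∃ I : Finset (Fin q), I.Nonempty ∧ ∃ lam : Fin q → ℝ,
        (∀ i ∈ I, 0 < lam i) ∧ (∀ i ∉ I, lam i = 0) ∧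
        (∀ i ∈ I, ∃ m : ℝ, ∀ x ∈ {x ∈ K | ∀ j, eval x (f j) ≤ eval xbar (f j)},
          m ≤ eval x (f i)) ∧
        Bornology.IsBounded
          (SOLmin (asymCone {x ∈ K | ∀ j, eval x (f j) ≤ eval xbar (f j)})
            (recPoly (∑ i, MvPolynomial.C (lam i) * f i)))) →
      (SOLs K (fun i x => eval x (f i))).Nonempty) ∧
    ((∃ xbar ∈ K, ∃ lam : Fin q → ℝ, (∀ i, 0 < lam i) ∧
        (∀ i, ∃ m : ℝ, ∀ x ∈ {x ∈ K | ∀ j, eval x (f j) ≤ eval xbar (f j)},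
          m ≤ eval x (f i)) ∧
        Bornology.IsBounded
          (SOLmin (asymCone {x ∈ K | ∀ j, eval x (f j) ≤ eval xbar (f j)})
            (recPoly (∑ i, MvPolynomial.C (lam i) * f i)))) →
      (SOLs K (fun i x => eval x (f i))).Nonempty) ∧
    ((∃ xbar ∈ K, ∃ I : Finset (Fin q), I.Nonempty ∧
        (∀ i ∈ I, ∃ m : ℝ, ∀ x ∈ {x ∈ K | ∀ j, eval x (f j) ≤ eval xbar (f j)},
          m ≤ eval x (f i)) ∧
        Bornology.IsBounded
          (SOLw (asymCone {x ∈ K | ∀ j, eval x (f j) ≤ eval xbar (f j)})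
            (fun i => recPoly (f i)))) →
      (SOLs K (fun i x => eval x (f i))).Nonempty) ∧
    ((∃ xbar ∈ K,
        (∀ i, ∃ m : ℝ, ∀ x ∈ {x ∈ K | ∀ j, eval x (f j) ≤ eval xbar (f j)},
          m ≤ eval x (f i)) ∧
        Bornology.IsBounded
          (SOLs (asymCone {x ∈ K | ∀ j, eval x (f j) ≤ eval xbar (f j)})
            (fun i => recPoly (f i)))) →
      (SOLs K (fun i x => eval x (f i))).Nonempty) := by
  constructor
  · rintro ⟨xbar, hxb, I, _hIne, lam, hpos, hzero, hbdd, hsol⟩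
    exact Stmt16Aux.case_i hKcl f hxb hpos hzero hbdd hsol
  constructor
  · rintro ⟨xbar, hxb, lam, hpos, hbdd, hsol⟩
    rcases Nat.eq_zero_or_pos q with hq | hq
    · subst hq
      exact ⟨xbar, hxb, by rintro ⟨y, hy, hle, i, _⟩; exact i.elim0⟩
    · exact Stmt16Aux.case_i hKcl f hxb (I := Finset.univ) (fun i _ => hpos i)
        (fun i hi => absurd (Finset.mem_univ i) hi) (fun i _ => hbdd i) hsol
  constructor
  · rintro ⟨xbar, hxb, I, hIne, hbdd, hsol⟩
    exact Stmt16Aux.case_iii hKcl f hdeg hxb hIne hbdd hsol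
  · rintro ⟨xbar, hxb, hbdd, hsol⟩
    exact Stmt16Aux.case_iv hKcl f hdeg hxb hbdd hsol
end
end
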